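/- arXiv:2001.10965 — 3 statements merged into one kernel-verified Lean document; each statement's English description precedes it below -/
import Mathlib

section
/- Let K be a positive-definite kernel on Ω ⊆ ℝ^d with reproducing kernel Hilbert space H_K(Ω), and let (X_N)_{N=1}^∞ ⊂ Ω be a sequence of point sets, X_N containing N distinct points. If f ∈ H_K(Ω), then σ_ML(f,X_N) ≤ N^{−1/2} ‖f‖_{H_K(Ω)} for every N. If, in addition, there exists a point x* ∈ Ω such that f(x*) ≠ 0 and x* ∈ X_N for all sufficiently large N, then σ_ML(f,X_N) ≍ N^{−1/2}, i.e. there exist constants c, C > 0 such that c N^{−1/2} ≤ σ_ML(f,X_N) ≤ C N^{−1/2} for all sufficiently large N. -/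
open MeasureTheory Filter Matrix Real Function
open scoped BigOperators RealInnerProductSpace FourierTransform Topology NNReal

noncomputable section

/-- Euclidean space `ℝ^d`. -/
abbrev Euc (d : ℕ) := EuclideanSpace ℝ (Fin d)

variable {d : ℕ}

/-- The kernel matrix `(K_X)_{ij} = K(x_i, x_j)`. -/
def kernelMatrix (K : Euc d → Euc d → ℝ) {N : ℕ} (x : Fin N → Euc d) :
    Matrix (Fin N) (Fin N) ℝ :=
  Matrix.of fun i j => K (x i) (x j)

/-- A positive-definite kernel on `Ω`: every kernel matrix built from finitely many
distinct points of `Ω` is positive-definite. -/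
def IsPosDefKernel (Ω : Set (Euc d)) (K : Euc d → Euc d → ℝ) : Prop :=
  ∀ (N : ℕ) (x : Fin N → Euc d), Function.Injective x → (∀ i, x i ∈ Ω) → 0 < N →
    (kernelMatrix K x).PosDef

/-- The vector `(k_X(t))_i = K(t, x_i)`. -/
def kvec (K : Euc d → Euc d → ℝ) {N : ℕ} (x : Fin N → Euc d) (t : Euc d) : Fin N → ℝ :=
  fun i => K t (x i)

/-- The data vector `(f_X)_i = f(x_i)`. -/
def fvec (f : Euc d → ℝ) {N : ℕ} (x : Fin N → Euc d) : Fin N → ℝ := fun i => f (x i)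

/-- The GP conditional mean `s_{f,X}(t) = k_X(t)ᵀ K_X⁻¹ f_X`. -/
def condMean (K : Euc d → Euc d → ℝ) {N : ℕ} (x : Fin N → Euc d) (f : Euc d → ℝ)
    (t : Euc d) : ℝ :=
  kvec K x t ⬝ᵥ ((kernelMatrix K x)⁻¹ *ᵥ fvec f x)

/-- The GP conditional covariance `P_X(s,t) = K(s,t) - k_X(s)ᵀ K_X⁻¹ k_X(t)`. -/
def condCov (K : Euc d → Euc d → ℝ) {N : ℕ} (x : Fin N → Euc d) (s t : Euc d) : ℝ :=
  K s t - kvec K x s ⬝ᵥ ((kernelMatrix K x)⁻¹ *ᵥ kvec K x t)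

/-- The quadratic form `f_Xᵀ K_X⁻¹ f_X`. -/
def quadForm (K : Euc d → Euc d → ℝ) (f : Euc d → ℝ) {N : ℕ} (x : Fin N → Euc d) : ℝ :=
  fvec f x ⬝ᵥ ((kernelMatrix K x)⁻¹ *ᵥ fvec f x)

/-- The maximum likelihood estimate `σ_ML(f,X) = √(f_Xᵀ K_X⁻¹ f_X / N)`. -/
def sigmaML (K : Euc d → Euc d → ℝ) (f : Euc d → ℝ) {N : ℕ} (x : Fin N → Euc d) : ℝ :=
  Real.sqrt (quadForm K f x / N)

/-- The integral `I(f) = ∫_Ω f(t) w(t) dt`. -/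
def intF (Ω : Set (Euc d)) (w f : Euc d → ℝ) : ℝ := ∫ t in Ω, f t * w t

/-- The Bayesian cubature estimate `Q_X(f) = ∫_Ω s_{f,X}(t) w(t) dt`. -/
def quadQ (Ω : Set (Euc d)) (w : Euc d → ℝ) (K : Euc d → Euc d → ℝ) {N : ℕ}
    (x : Fin N → Euc d) (f : Euc d → ℝ) : ℝ := ∫ t in Ω, condMean K x f t * w t

/-- The Bayesian cubature variance `V_X = ∫_Ω ∫_Ω P_X(s,t) w(s) w(t) ds dt`. -/
def quadV (Ω : Set (Euc d)) (w : Euc d → ℝ) (K : Euc d → Euc d → ℝ) {N : ℕ}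
    (x : Fin N → Euc d) : ℝ := ∫ s in Ω, ∫ t in Ω, condCov K x s t * w s * w t

/-- Credible-set width `R_GP(t,f,X) = σ_ML(f,X) P_X(t,t)^{1/2}`. -/
def RGP (K : Euc d → Euc d → ℝ) (f : Euc d → ℝ) {N : ℕ} (x : Fin N → Euc d)
    (t : Euc d) : ℝ :=
  sigmaML K f x * Real.sqrt (condCov K x t t)

/-- Credible-set width `R_BC(f,X) = σ_ML(f,X) V_X^{1/2}`. -/
def RBC (Ω : Set (Euc d)) (w : Euc d → ℝ) (K : Euc d → Euc d → ℝ) (f : Euc d → ℝ)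
    {N : ℕ} (x : Fin N → Euc d) : ℝ :=
  sigmaML K f x * Real.sqrt (quadV Ω w K x)

/-- Standard score `|err|/R`, with the convention that it equals `1` when `R = 0`. -/
def score (err R : ℝ) : ℝ := if R = 0 then 1 else |err| / R

/-- A positive, bounded, measurable weight function on `Ω`. -/
def IsWeight (Ω : Set (Euc d)) (w : Euc d → ℝ) : Prop :=
  Measurable w ∧ (∀ t ∈ Ω, 0 < w t) ∧ ∃ B, ∀ t ∈ Ω, w t ≤ B

/-- Fill-distance `h_X = sup_{t ∈ Ω} min_i ‖t - x_i‖`. -/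
def fillDist (Ω : Set (Euc d)) {N : ℕ} (x : Fin N → Euc d) : ℝ :=
  ⨆ t : Ω, ⨅ i, dist (t : Euc d) (x i)

/-- Separation radius `q_X = (1/2) min_{i ≠ j} ‖x_i - x_j‖`. -/
def sepRad {N : ℕ} (x : Fin N → Euc d) : ℝ :=
  (1 / 2) * ⨅ p : { p : Fin N × Fin N // p.1 ≠ p.2 }, dist (x p.val.1) (x p.val.2)

/-- Mesh ratio `ρ_X = h_X / q_X`. -/
def meshRatio (Ω : Set (Euc d)) {N : ℕ} (x : Fin N → Euc d) : ℝ :=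
  fillDist Ω x / sepRad x

/-- A quasi-uniform sequence of point sets in `Ω`, `X_N` containing `N` distinct points:
the mesh ratios `ρ_{X_N}` are bounded. -/
def QuasiUniform (Ω : Set (Euc d)) (x : (N : ℕ) → Fin N → Euc d) : Prop :=
  (∀ N, Function.Injective (x N)) ∧ (∀ N i, x N i ∈ Ω) ∧
    ∃ C : ℝ, ∀ N, meshRatio Ω (x N) ≤ C

/-- Fourier transform of a real-valued function on `ℝ^d`. -/
def fourierT (g : Euc d → ℝ) : Euc d → ℂ := 𝓕 (fun t => (g t : ℂ))

/-- The integrand `(1+‖ξ‖²)^α |ĝ(ξ)|²` defining the Sobolev norm. -/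
def sobIntegrand (α : ℝ) (g : Euc d → ℝ) (ξ : Euc d) : ℝ :=
  (1 + ‖ξ‖ ^ 2) ^ α * ‖fourierT g ξ‖ ^ 2

/-- Membership in the Sobolev space `W₂^α(ℝ^d)`. -/
def MemSobolev (α : ℝ) (g : Euc d → ℝ) : Prop :=
  MemLp g 2 (volume : Measure (Euc d)) ∧ Integrable (sobIntegrand α g)

/-- The Sobolev norm `‖g‖_{W₂^α(ℝ^d)} = (∫ (1+‖ξ‖²)^α |ĝ(ξ)|² dξ)^{1/2}`. -/
def sobNorm (α : ℝ) (g : Euc d → ℝ) : ℝ := Real.sqrt (∫ ξ, sobIntegrand α g ξ)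

/-- Membership in `W₂^α(Ω)`: existence of an extension in `W₂^α(ℝ^d)`. -/
def MemSobolevOn (Ω : Set (Euc d)) (α : ℝ) (g : Euc d → ℝ) : Prop :=
  ∃ g₀ : Euc d → ℝ, MemSobolev α g₀ ∧ Set.EqOn g₀ g Ω

/-- The norm of `W₂^α(Ω)`: infimum of `‖g₀‖_{W₂^α(ℝ^d)}` over extensions `g₀` of `g`. -/
def sobNormOn (Ω : Set (Euc d)) (α : ℝ) (g : Euc d → ℝ) : ℝ :=
  sInf (sobNorm α '' { g₀ : Euc d → ℝ | MemSobolev α g₀ ∧ Set.EqOn g₀ g Ω })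

/-- `S_-^β(ℝ^d)`: square-integrable `g` with `|ĝ(ξ)|² ≲ (1+‖ξ‖²)^{-(β+d/2)}`
for all sufficiently large `‖ξ‖`. -/
def MemSminus (β : ℝ) (g : Euc d → ℝ) : Prop :=
  MemLp g 2 (volume : Measure (Euc d)) ∧
    ∃ C R : ℝ, 0 < C ∧ ∀ ξ : Euc d, R ≤ ‖ξ‖ →
      ‖fourierT g ξ‖ ^ 2 ≤ C * (1 + ‖ξ‖ ^ 2) ^ (-(β + (d : ℝ) / 2))

/-- `S_+^β(ℝ^d)`: square-integrable `g` with `|ĝ(ξ)|² ≳ (1+‖ξ‖²)^{-(β+d/2)}`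
for all sufficiently large `‖ξ‖`. -/
def MemSplus (β : ℝ) (g : Euc d → ℝ) : Prop :=
  MemLp g 2 (volume : Measure (Euc d)) ∧
    ∃ c R : ℝ, 0 < c ∧ ∀ ξ : Euc d, R ≤ ‖ξ‖ →
      c * (1 + ‖ξ‖ ^ 2) ^ (-(β + (d : ℝ) / 2)) ≤ ‖fourierT g ξ‖ ^ 2

/-- `S^β(ℝ^d) = S_-^β(ℝ^d) ∩ S_+^β(ℝ^d)`. -/
def MemS (β : ℝ) (g : Euc d → ℝ) : Prop := MemSminus β g ∧ MemSplus β g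

/-- Membership in `S_-^β(Ω)`: existence of an extension in `S_-^β(ℝ^d)`. -/
def MemSminusOn (Ω : Set (Euc d)) (β : ℝ) (g : Euc d → ℝ) : Prop :=
  ∃ g₀ : Euc d → ℝ, MemSminus β g₀ ∧ Set.EqOn g₀ g Ω

/-- Interior cone condition for `Ω`. -/
def HasInteriorConeCondition (Ω : Set (Euc d)) : Prop :=
  ∃ θ r : ℝ, 0 < θ ∧ θ < π / 2 ∧ 0 < r ∧
    ∀ x ∈ Ω, ∃ ξ : Euc d, ‖ξ‖ = 1 ∧
      ∀ (y : Euc d) (lam : ℝ), ‖y‖ = 1 → Real.cos θ ≤ ⟪y, ξ⟫ →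
        lam ∈ Set.Icc 0 r → x + lam • y ∈ Ω

/-- Lipschitz boundary: near each boundary point, `Ω` is the subgraph of a Lipschitz
function over a hyperplane. -/
def HasLipschitzBoundary (Ω : Set (Euc d)) : Prop :=
  ∀ p ∈ frontier Ω, ∃ ν : Euc d, ‖ν‖ = 1 ∧
    ∃ (φ : Euc d → ℝ) (L : ℝ≥0), LipschitzWith L φ ∧
      ∃ ε > (0 : ℝ), ∀ z ∈ Metric.ball p ε,
        (z ∈ Ω ↔ ⟪z, ν⟫ < φ (z - ⟪z, ν⟫ • ν))

/-- Assumption 2.1 of the paper: `Ω` is bounded and connected, has non-empty interior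
and a Lipschitz boundary, and satisfies an interior cone condition. -/
structure DomainAssumption (Ω : Set (Euc d)) : Prop where
  bounded : Bornology.IsBounded Ω
  connected : IsConnected Ω
  interior_nonempty : (interior Ω).Nonempty
  lipschitz : HasLipschitzBoundary Ω
  cone : HasInteriorConeCondition Ω

/-- `K` is a Sobolev kernel of order `α` on `Ω`: it is a positive-definite kernel whose
reproducing kernel Hilbert space equals `W₂^α(Ω)` as a set, with equivalent norms. The
RKHS is encoded by a real Hilbert space `H` together with a feature map `Kf` whose inner
products reproduce the kernel, such that elements of `H` are determined by the functions
`t ↦ ⟪g, Kf t⟫` they induce on `Ω`. -/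
def IsSobolevKernel (Ω : Set (Euc d)) (K : Euc d → Euc d → ℝ) (α : ℝ) : Prop :=
  IsPosDefKernel Ω K ∧
  ∃ (H : Type) (i₁ : NormedAddCommGroup H) (i₂ : @InnerProductSpace ℝ H _ i₁.toSeminormedAddCommGroup)
      (Kf : Euc d → H),
    (∀ x ∈ Ω, ∀ y ∈ Ω, @inner ℝ H i₂.toInner (Kf x) (Kf y) = K x y) ∧
    (∀ g : H, (∀ t ∈ Ω, @inner ℝ H i₂.toInner g (Kf t) = 0) → g = 0) ∧
    (∀ g : H, MemSobolevOn Ω α (fun t => @inner ℝ H i₂.toInner g (Kf t))) ∧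
    (∀ f : Euc d → ℝ, MemSobolevOn Ω α f →
      ∃ g : H, ∀ t ∈ Ω, @inner ℝ H i₂.toInner g (Kf t) = f t) ∧
    ∃ cK CK : ℝ, 0 < cK ∧ 0 < CK ∧ ∀ g : H,
      cK * sobNormOn Ω α (fun t => @inner ℝ H i₂.toInner g (Kf t)) ≤ @norm H i₁.toNorm g ∧
      @norm H i₁.toNorm g ≤ CK * sobNormOn Ω α (fun t => @inner ℝ H i₂.toInner g (Kf t))

end

/-- Key quadratic-form facts for the ML scale estimate: nonnegativity, the RKHS upper
bound `f_Xᵀ K_X⁻¹ f_X ≤ ‖F‖²`, and the pointwise lower bound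
`f(x_j)² ≤ K(x_j,x_j) · f_Xᵀ K_X⁻¹ f_X`. -/
theorem key_quadForm {d : ℕ} (Ω : Set (Euc d)) (K : Euc d → Euc d → ℝ)
    (hK : IsPosDefKernel Ω K)
    {H : Type*} [NormedAddCommGroup H] [InnerProductSpace ℝ H] (Kf : Euc d → H)
    (hKf : ∀ x ∈ Ω, ∀ y ∈ Ω, ⟪Kf x, Kf y⟫ = K x y)
    (f : Euc d → ℝ) (F : H) (hF : ∀ t ∈ Ω, ⟪F, Kf t⟫ = f t)
    {N : ℕ} (hN : 0 < N) (x : Fin N → Euc d) (hinj : Function.Injective x)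
    (hmem : ∀ i, x i ∈ Ω) :
    0 ≤ quadForm K f x ∧ quadForm K f x ≤ ‖F‖ ^ 2 ∧
      ∀ j, f (x j) ^ 2 ≤ K (x j) (x j) * quadForm K f x := by
  set G := kernelMatrix K x with hGdef
  have hG : G.PosDef := hK N x hinj hmem hN
  have hGinv : G * G⁻¹ = 1 := Matrix.mul_nonsing_inv G hG.det_pos.ne'.isUnit
  set v := fvec f x with hvdef
  set a := G⁻¹ *ᵥ v with hadef
  have hGa : G *ᵥ a = v := by
    rw [hadef, Matrix.mulVec_mulVec, hGinv, Matrix.one_mulVec]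
  set g : H := ∑ i, a i • Kf (x i) with hgdef
  have hsym : ∀ i j, G i j = G j i := by
    intro i j
    show K (x i) (x j) = K (x j) (x i)
    rw [← hKf _ (hmem i) _ (hmem j), ← hKf _ (hmem j) _ (hmem i), real_inner_comm]
  have hgj : ∀ j, ⟪g, Kf (x j)⟫ = v j := by
    intro j
    rw [hgdef, sum_inner]
    have : ∀ i, ⟪a i • Kf (x i), Kf (x j)⟫ = G j i * a i := by
      intro i
      rw [real_inner_smul_left, hKf _ (hmem i) _ (hmem j)]
      show a i * G i j = G j i * a i
      rw [hsym i j, mul_comm]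
    simp_rw [this]
    rw [← hGa]
    rfl
  have hgg : ⟪g, g⟫ = v ⬝ᵥ a := by
    conv_lhs => rw [hgdef]
    rw [sum_inner]
    have : ∀ i, ⟪a i • Kf (x i), g⟫ = v i * a i := by
      intro i
      rw [real_inner_smul_left, real_inner_comm, hgj i, mul_comm]
    rw [← hgdef]
    simp_rw [this]
    rfl
  have hFg : ⟪F, g⟫ = v ⬝ᵥ a := by
    rw [hgdef, inner_sum]
    have : ∀ i, ⟪F, a i • Kf (x i)⟫ = v i * a i := by
      intro i
      rw [real_inner_smul_right, hF _ (hmem i)]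
      show a i * v i = v i * a i
      ring
    simp_rw [this]
    rfl
  have hQ : quadForm K f x = v ⬝ᵥ a := rfl
  have hQg : quadForm K f x = ‖g‖ ^ 2 := by
    rw [hQ, ← hgg, real_inner_self_eq_norm_sq]
  refine ⟨by rw [hQg]; positivity, ?_, ?_⟩
  · have h1 : quadForm K f x = ⟪F, g⟫ := by rw [hQ, hFg]
    have h2 : ⟪F, g⟫ ≤ ‖F‖ * ‖g‖ := real_inner_le_norm F g
    nlinarith [norm_nonneg g, norm_nonneg F, sq_nonneg (‖F‖ - ‖g‖)]
  · intro j
    have h1 : ⟪g, Kf (x j)⟫ * ⟪g, Kf (x j)⟫ ≤ ⟪g, g⟫ * ⟪Kf (x j), Kf (x j)⟫ :=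
      real_inner_mul_inner_self_le g (Kf (x j))
    rw [hgj j, hgg, hKf _ (hmem j) _ (hmem j)] at h1
    have hv : v j = f (x j) := rfl
    rw [hv] at h1
    calc f (x j) ^ 2 = f (x j) * f (x j) := by ring
      _ ≤ (v ⬝ᵥ a) * K (x j) (x j) := h1
      _ = K (x j) (x j) * quadForm K f x := by rw [hQ]; ring

/-- `N^{-1/2} = 1/√N` for natural `N`. -/
theorem rpow_neg_half_eq {N : ℕ} :
    (N : ℝ) ^ (-(1 / 2 : ℝ)) = (Real.sqrt N)⁻¹ := by
  rw [Real.rpow_neg (Nat.cast_nonneg N), Real.sqrt_eq_rpow]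

/-- Proposition 3.1 of the paper. Let `K` be a positive-definite kernel
on `Ω` with RKHS `H` (encoded by the feature map `Kf`), and let `(X_N)` be point sets,
`X_N` containing `N` distinct points of `Ω`. If `f ∈ H_K(Ω)` (i.e. `f` is represented on
`Ω` by `F ∈ H`), then `σ_ML(f,X_N) ≤ N^{-1/2} ‖f‖_{H_K(Ω)}` for every `N`; and if there
is `x* ∈ Ω` with `f(x*) ≠ 0` belonging to `X_N` for all sufficiently large `N`, then
`σ_ML(f,X_N) ≍ N^{-1/2}`. -/
theorem sigmaML_asymp_rkhs {d : ℕ} (Ω : Set (Euc d)) (K : Euc d → Euc d → ℝ)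
    (hK : IsPosDefKernel Ω K)
    {H : Type*} [NormedAddCommGroup H] [InnerProductSpace ℝ H] (Kf : Euc d → H)
    (hKf : ∀ x ∈ Ω, ∀ y ∈ Ω, ⟪Kf x, Kf y⟫ = K x y)
    (hsep : ∀ g : H, (∀ t ∈ Ω, ⟪g, Kf t⟫ = 0) → g = 0)
    (x : (N : ℕ) → Fin N → Euc d)
    (hx : ∀ N, Function.Injective (x N)) (hxΩ : ∀ N i, x N i ∈ Ω)
    (f : Euc d → ℝ) (F : H) (hF : ∀ t ∈ Ω, ⟪F, Kf t⟫ = f t) :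
    (∀ N : ℕ, sigmaML K f (x N) ≤ (N : ℝ) ^ (-(1 / 2 : ℝ)) * ‖F‖) ∧
      ((∃ xstar ∈ Ω, f xstar ≠ 0 ∧ ∀ᶠ N : ℕ in atTop, ∃ i, x N i = xstar) →
        ∃ c C : ℝ, 0 < c ∧ 0 < C ∧ ∀ᶠ N : ℕ in atTop,
          c * (N : ℝ) ^ (-(1 / 2 : ℝ)) ≤ sigmaML K f (x N) ∧
            sigmaML K f (x N) ≤ C * (N : ℝ) ^ (-(1 / 2 : ℝ))) := by
  have upper : ∀ N : ℕ, 0 < N → sigmaML K f (x N) ≤ (N : ℝ) ^ (-(1 / 2 : ℝ)) * ‖F‖ := by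
    intro N hN
    obtain ⟨hQ0, hQle, -⟩ :=
      key_quadForm Ω K hK Kf hKf f F hF hN (x N) (hx N) (fun i => hxΩ N i)
    have hNpos : (0 : ℝ) < (N : ℝ) := by exact_mod_cast hN
    have h1 : sigmaML K f (x N) ≤ Real.sqrt (‖F‖ ^ 2 / N) := by
      apply Real.sqrt_le_sqrt
      gcongr
    calc sigmaML K f (x N) ≤ Real.sqrt (‖F‖ ^ 2 / N) := h1
      _ = ‖F‖ / Real.sqrt N := by
          rw [Real.sqrt_div (sq_nonneg _), Real.sqrt_sq (norm_nonneg F)]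
      _ = (N : ℝ) ^ (-(1 / 2 : ℝ)) * ‖F‖ := by
          rw [rpow_neg_half_eq, div_eq_inv_mul]
  constructor
  · intro N
    rcases Nat.eq_zero_or_pos N with h0 | hN
    · subst h0
      have : sigmaML K f (x 0) = 0 := by
        simp [sigmaML, quadForm, dotProduct]
      rw [this]
      positivity
    · exact upper N hN
  · rintro ⟨xs, hxsΩ, hfxs, hev⟩
    have hFne : F ≠ 0 := by
      intro h
      exact hfxs (by rw [← hF xs hxsΩ, h, inner_zero_left])
    have hKne : Kf xs ≠ 0 := by
      intro h
      exact hfxs (by rw [← hF xs hxsΩ, h, inner_zero_right])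
    have hKpos : 0 < K xs xs := by
      rw [← hKf xs hxsΩ xs hxsΩ, real_inner_self_eq_norm_sq]
      have := norm_pos_iff.mpr hKne
      positivity
    have hq : (0 : ℝ) < f xs ^ 2 / K xs xs := by positivity
    refine ⟨Real.sqrt (f xs ^ 2 / K xs xs), ‖F‖, Real.sqrt_pos.mpr hq,
      norm_pos_iff.mpr hFne, ?_⟩
    filter_upwards [hev, eventually_ge_atTop 1] with N hNi hN1
    obtain ⟨j, hj⟩ := hNi
    have hN : 0 < N := hN1
    have hNpos : (0 : ℝ) < (N : ℝ) := by exact_mod_cast hN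
    obtain ⟨hQ0, hQle, hQlow⟩ :=
      key_quadForm Ω K hK Kf hKf f F hF hN (x N) (hx N) (fun i => hxΩ N i)
    have hQlow' : f xs ^ 2 / K xs xs ≤ quadForm K f (x N) := by
      have := hQlow j
      rw [hj] at this
      rw [div_le_iff₀ hKpos]
      linarith [this]
    refine ⟨?_, by rw [mul_comm]; exact upper N hN⟩
    calc Real.sqrt (f xs ^ 2 / K xs xs) * (N : ℝ) ^ (-(1 / 2 : ℝ))
        = Real.sqrt (f xs ^ 2 / K xs xs / N) := by
          rw [rpow_neg_half_eq, Real.sqrt_div hq.le]; ring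
      _ ≤ Real.sqrt (quadForm K f (x N) / N) := by
          apply Real.sqrt_le_sqrt
          gcongr
      _ = sigmaML K f (x N) := rfl
end

section
/- Let K(x,y) = min{x,y} be the Brownian motion kernel on Ω = [0,1], let w ≡ 1, and let X_N = {1/N, 2/N, …, 1} be the equispaced points x_n = n/N, n = 1,…,N. Then the Bayesian quadrature integral variance equals V_{X_N} = ∫₀¹ ∫₀¹ P_{X_N}(x,y) dx dy = 1/(12 N²). -/
open MeasureTheory Filter Matrix Real Function
open scoped BigOperators Topology

noncomputable section

/-- The kernel matrix `(K_X)_{ij} = K(x_i, x_j)` for a kernel on `ℝ`. -/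
def kernelMatrix1 (K : ℝ → ℝ → ℝ) {N : ℕ} (x : Fin N → ℝ) : Matrix (Fin N) (Fin N) ℝ :=
  Matrix.of fun i j => K (x i) (x j)

/-- The vector `(k_X(t))_i = K(t, x_i)`. -/
def kvec1 (K : ℝ → ℝ → ℝ) {N : ℕ} (x : Fin N → ℝ) (t : ℝ) : Fin N → ℝ :=
  fun i => K t (x i)

/-- The data vector `(f_X)_i = f(x_i)`. -/
def fvec1 (f : ℝ → ℝ) {N : ℕ} (x : Fin N → ℝ) : Fin N → ℝ := fun i => f (x i)

/-- The GP conditional mean `s_{f,X}(t) = k_X(t)ᵀ K_X⁻¹ f_X`. -/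
def condMean1 (K : ℝ → ℝ → ℝ) {N : ℕ} (x : Fin N → ℝ) (f : ℝ → ℝ) (t : ℝ) : ℝ :=
  kvec1 K x t ⬝ᵥ ((kernelMatrix1 K x)⁻¹ *ᵥ fvec1 f x)

/-- The GP conditional covariance `P_X(s,t) = K(s,t) - k_X(s)ᵀ K_X⁻¹ k_X(t)`. -/
def condCov1 (K : ℝ → ℝ → ℝ) {N : ℕ} (x : Fin N → ℝ) (s t : ℝ) : ℝ :=
  K s t - kvec1 K x s ⬝ᵥ ((kernelMatrix1 K x)⁻¹ *ᵥ kvec1 K x t)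

/-- The quadratic form `f_Xᵀ K_X⁻¹ f_X`. -/
def quadForm1 (K : ℝ → ℝ → ℝ) (f : ℝ → ℝ) {N : ℕ} (x : Fin N → ℝ) : ℝ :=
  fvec1 f x ⬝ᵥ ((kernelMatrix1 K x)⁻¹ *ᵥ fvec1 f x)

/-- The maximum likelihood estimate `σ_ML(f,X) = √(f_Xᵀ K_X⁻¹ f_X / N)`. -/
def sigmaML1 (K : ℝ → ℝ → ℝ) (f : ℝ → ℝ) {N : ℕ} (x : Fin N → ℝ) : ℝ :=
  Real.sqrt (quadForm1 K f x / N)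

/-- The integral `I(f) = ∫₀¹ f(t) dt` (weight `w ≡ 1`). -/
def intF1 (f : ℝ → ℝ) : ℝ := ∫ t in Set.Icc (0 : ℝ) 1, f t

/-- The Bayesian quadrature estimate `Q_X(f) = ∫₀¹ s_{f,X}(t) dt` (weight `w ≡ 1`). -/
def quadQ1 (K : ℝ → ℝ → ℝ) {N : ℕ} (x : Fin N → ℝ) (f : ℝ → ℝ) : ℝ :=
  ∫ t in Set.Icc (0 : ℝ) 1, condMean1 K x f t

/-- The Bayesian quadrature variance `V_X = ∫₀¹ ∫₀¹ P_X(s,t) ds dt` (weight `w ≡ 1`). -/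
def quadV1 (K : ℝ → ℝ → ℝ) {N : ℕ} (x : Fin N → ℝ) : ℝ :=
  ∫ s in Set.Icc (0 : ℝ) 1, ∫ t in Set.Icc (0 : ℝ) 1, condCov1 K x s t

/-- Credible-interval width `R_BC(f,X) = σ_ML(f,X) V_X^{1/2}`. -/
def RBC1 (K : ℝ → ℝ → ℝ) (f : ℝ → ℝ) {N : ℕ} (x : Fin N → ℝ) : ℝ :=
  sigmaML1 K f x * Real.sqrt (quadV1 K x)

/-- Standard score `|err|/R`, with the convention that it equals `1` when `R = 0`. -/
def score1 (err R : ℝ) : ℝ := if R = 0 then 1 else |err| / R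

/-- The Brownian motion kernel `K(s,t) = min{s,t}` on `[0,1]`. -/
def bmK : ℝ → ℝ → ℝ := fun s t => min s t

/-- The equispaced points `x_n = n/N`, `n = 1, …, N`. -/
def eqPts (N : ℕ) : Fin N → ℝ := fun i => ((i : ℕ) + 1 : ℝ) / N

end
noncomputable section

noncomputable section BQHelpers

open Finset Matrix MeasureTheory intervalIntegral

namespace BQ17

lemma sum_succ_real (n : ℕ) : ∑ i ∈ range n, ((i:ℝ)+1) = (n:ℝ)*(n+1)/2 := by
  induction n with
  | zero => simp
  | succ m ih => rw [Finset.sum_range_succ, ih]; push_cast; ring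

lemma sum_succ_sq_real (n : ℕ) : ∑ i ∈ range n, ((i:ℝ)+1)^2 = (n:ℝ)*(n+1)*(2*n+1)/6 := by
  induction n with
  | zero => simp
  | succ m ih => rw [Finset.sum_range_succ, ih]; push_cast; ring

lemma sum_min_ge (M n : ℕ) (h : M ≤ n) :
    ∑ j ∈ range M, ((min n (j+1) : ℕ) : ℝ) = M*(M+1)/2 := by
  induction M with
  | zero => simp
  | succ m ih =>
    rw [Finset.sum_range_succ, ih (le_trans (Nat.le_succ m) h),
        min_eq_right (by omega : m + 1 ≤ n)]
    push_cast; ring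

lemma sum_min_le (M n : ℕ) (h : n ≤ M) :
    ∑ j ∈ range M, ((min n (j+1) : ℕ) : ℝ) = n*(n+1)/2 + n*(M-n) := by
  induction M with
  | zero =>
    interval_cases n
    simp
  | succ m ih =>
    rcases Nat.lt_or_ge n (m+1) with hn | hn
    · rw [Finset.sum_range_succ, ih (by omega), min_eq_left (by omega)]
      push_cast; ring
    · have hnm : n = m + 1 := le_antisymm h hn
      subst hnm
      rw [Finset.sum_range_succ, sum_min_ge m (m+1) (Nat.le_succ m),
          min_eq_right (le_refl _)]
      push_cast; ring

lemma sum_indic (m N : ℕ) :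
    ∑ k ∈ range N, (if k ≤ m then (1:ℝ) else 0) = min N (m+1) := by
  induction N with
  | zero => simp
  | succ n ih =>
    rw [Finset.sum_range_succ, ih]
    rcases Nat.lt_or_ge m n with h | h
    · rw [if_neg (by omega), min_eq_right (by omega), min_eq_right (by omega)]
      simp
    · rw [if_pos (by omega), min_eq_left (by omega), min_eq_left (by omega)]
      push_cast; ring

/-- Lower-triangular factor of the kernel matrix. -/
def lowL (N : ℕ) : Matrix (Fin N) (Fin N) ℝ :=
  Matrix.of fun i j => if (j:ℕ) ≤ (i:ℕ) then (1:ℝ) else 0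

lemma kernel_entry {N : ℕ} (i j : Fin N) :
    kernelMatrix1 bmK (eqPts N) i j = ((min (i:ℕ) (j:ℕ) : ℕ) + 1 : ℝ) / N := by
  have hNpos : (0:ℝ) ≤ N := Nat.cast_nonneg N
  simp only [kernelMatrix1, bmK, eqPts, Matrix.of_apply]
  rw [min_div_div_right hNpos]
  congr 1
  push_cast
  exact min_add_add_right ((i:ℕ):ℝ) ((j:ℕ):ℝ) 1

lemma kernel_decomp {N : ℕ} :
    kernelMatrix1 bmK (eqPts N) = ((N:ℝ))⁻¹ • (lowL N * (lowL N)ᵀ) := by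
  ext i j
  rw [kernel_entry i j]
  simp only [Matrix.smul_apply, Matrix.mul_apply, Matrix.transpose_apply, lowL,
    Matrix.of_apply, smul_eq_mul]
  have : ∀ k : Fin N, (if (k:ℕ) ≤ (i:ℕ) then (1:ℝ) else 0) * (if (k:ℕ) ≤ (j:ℕ) then (1:ℝ) else 0)
      = if (k:ℕ) ≤ min (i:ℕ) (j:ℕ) then (1:ℝ) else 0 := by
    intro k; simp only [Nat.le_min]; split_ifs with h1 h2 h3 h3 <;> simp_all
  rw [Finset.sum_congr rfl (fun k _ => this k), Fin.sum_univ_eq_sum_range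
    (fun k => if k ≤ min (i:ℕ) (j:ℕ) then (1:ℝ) else 0) N, sum_indic,
    min_eq_right (by omega : min (i:ℕ) (j:ℕ) + 1 ≤ N)]
  push_cast
  ring

lemma det_lowL (N : ℕ) : (lowL N).det = 1 := by
  rw [← Matrix.det_transpose]
  rw [Matrix.det_of_upperTriangular (M := (lowL N)ᵀ) ?_]
  · simp [lowL]
  · intro i j h
    simp only [Matrix.transpose_apply, lowL, Matrix.of_apply]
    rw [if_neg]
    exact fun hc => absurd (Fin.le_def.mpr hc) (not_le.mpr h)

lemma det_kernel_ne {N : ℕ} (hN : 0 < N) :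
    (kernelMatrix1 bmK (eqPts N)).det ≠ 0 := by
  rw [kernel_decomp, Matrix.det_smul, Matrix.det_mul, Matrix.det_transpose, det_lowL]
  have h1 : ((N:ℝ))⁻¹ ≠ 0 := by positivity
  simp [h1]

/-- The solution vector `u = K⁻¹ v`. -/
def uu (N : ℕ) : Fin N → ℝ :=
  fun j => if (j:ℕ) = N-1 then 1/(2*N) else 1/N

/-- The vector of integrated kernel values. -/
def vv (N : ℕ) : Fin N → ℝ :=
  fun i => eqPts N i - (eqPts N i)^2/2

lemma mulVec_u {N : ℕ} (hN : 0 < N) :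
    (kernelMatrix1 bmK (eqPts N)) *ᵥ (uu N) = vv N := by
  obtain ⟨M, rfl⟩ : ∃ M, N = M + 1 := ⟨N-1, (Nat.succ_pred_eq_of_pos hN).symm⟩
  ext i
  have key : ∀ j : Fin (M+1), (kernelMatrix1 bmK (eqPts (M+1))) i j * uu (M+1) j
      = (fun m => ((min ((i:ℕ)+1) (m+1) : ℕ):ℝ)/(M+1) *
          (if m = M then (1:ℝ)/(2*(M+1)) else 1/(M+1))) (j:ℕ) := by
    intro j
    rw [kernel_entry i j]
    simp only [uu, Nat.add_sub_cancel, Nat.succ_min_succ]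
    push_cast
    ring_nf
  simp only [Matrix.mulVec, dotProduct]
  rw [Finset.sum_congr rfl (fun j _ => key j),
      Fin.sum_univ_eq_sum_range (fun m => ((min ((i:ℕ)+1) (m+1) : ℕ):ℝ)/(M+1) *
        (if m = M then (1:ℝ)/(2*(M+1)) else 1/(M+1))) (M+1), Finset.sum_range_succ]
  have congr1 : ∀ m ∈ range M,
      ((min ((i:ℕ)+1) (m+1) : ℕ):ℝ)/(M+1) * (if m = M then (1:ℝ)/(2*(M+1)) else 1/(M+1))
      = ((min ((i:ℕ)+1) (m+1) : ℕ):ℝ) * (1/((M+1)*(M+1))) := by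
    intro m hm
    rw [if_neg (by simpa using Nat.ne_of_lt (Finset.mem_range.mp hm))]
    have : ((M:ℝ)+1) ≠ 0 := by positivity
    push_cast
    field_simp
  rw [Finset.sum_congr rfl congr1, ← Finset.sum_mul, if_pos rfl,
      min_eq_left (by omega : (i:ℕ)+1 ≤ M+1)]
  have hMR : ((M:ℝ)+1) ≠ 0 := by positivity
  rcases Nat.lt_or_ge (i:ℕ) M with hi | hi
  · rw [sum_min_le M ((i:ℕ)+1) (by omega)]
    simp only [vv, eqPts]
    push_cast
    field_simp
    ring
  · have : (i:ℕ) = M := by omega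
    rw [sum_min_ge M ((i:ℕ)+1) (by omega)]
    simp only [vv, eqPts, this]
    push_cast
    field_simp
    ring

lemma inv_mulVec_vv {N : ℕ} (hN : 0 < N) :
    (kernelMatrix1 bmK (eqPts N))⁻¹ *ᵥ vv N = uu N := by
  have hdet : IsUnit (kernelMatrix1 bmK (eqPts N)).det :=
    isUnit_iff_ne_zero.mpr (det_kernel_ne hN)
  rw [← mulVec_u hN, Matrix.mulVec_mulVec, Matrix.nonsing_inv_mul _ hdet,
      Matrix.one_mulVec]

lemma int_min (a : ℝ) (ha : a ∈ Set.Icc (0:ℝ) 1) :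
    ∫ t in Set.Icc (0:ℝ) 1, min a t = a - a^2/2 := by
  obtain ⟨h0, h1⟩ := ha
  rw [MeasureTheory.integral_Icc_eq_integral_Ioc,
      ← intervalIntegral.integral_of_le (by norm_num : (0:ℝ) ≤ 1)]
  have hi : ∀ b c : ℝ, IntervalIntegrable (fun t => min a t) volume b c :=
    fun b c => (Continuous.min continuous_const continuous_id).intervalIntegrable b c
  rw [← intervalIntegral.integral_add_adjacent_intervals (hi 0 a) (hi a 1)]
  have e1 : ∫ t in (0:ℝ)..a, min a t = ∫ t in (0:ℝ)..a, t := by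
    apply intervalIntegral.integral_congr
    intro t ht
    rw [Set.uIcc_of_le h0] at ht
    exact min_eq_right ht.2
  have e2 : ∫ t in a..(1:ℝ), min a t = ∫ t in a..(1:ℝ), a := by
    apply intervalIntegral.integral_congr
    intro t ht
    rw [Set.uIcc_of_le h1] at ht
    exact min_eq_left ht.1
  rw [e1, e2, integral_id, intervalIntegral.integral_const]
  simp [smul_eq_mul]; ring

lemma int_poly : ∫ s in Set.Icc (0:ℝ) 1, (s - s^2/2) = 1/3 := by
  rw [MeasureTheory.integral_Icc_eq_integral_Ioc,
      ← intervalIntegral.integral_of_le (by norm_num : (0:ℝ) ≤ 1)]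
  have h1 : IntervalIntegrable (fun s : ℝ => s) volume 0 1 :=
    continuous_id.intervalIntegrable 0 1
  have h2 : IntervalIntegrable (fun s : ℝ => s^2/2) volume 0 1 :=
    ((continuous_pow 2).div_const 2).intervalIntegrable 0 1
  rw [intervalIntegral.integral_sub h1 h2, intervalIntegral.integral_div,
      integral_id, integral_pow]
  norm_num

lemma eqPts_mem {N : ℕ} (hN : 0 < N) (j : Fin N) : eqPts N j ∈ Set.Icc (0:ℝ) 1 := by
  have hNR : (0:ℝ) < N := by exact_mod_cast hN
  simp only [eqPts]
  constructor
  · positivity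
  · rw [div_le_one hNR]
    exact_mod_cast Nat.succ_le_of_lt j.isLt

lemma sum_vu {N : ℕ} (hN : 0 < N) :
    ∑ i : Fin N, uu N i * vv N i = 1/3 - 1/(12*(N:ℝ)^2) := by
  obtain ⟨M, rfl⟩ : ∃ M, N = M + 1 := ⟨N-1, (Nat.succ_pred_eq_of_pos hN).symm⟩
  have hMR : ((M:ℝ)+1) ≠ 0 := by positivity
  have key : ∀ i : Fin (M+1), uu (M+1) i * vv (M+1) i
      = (fun m => (if m = M then (1:ℝ)/(2*(M+1)) else 1/(M+1)) *
          (((m:ℝ)+1)/(M+1) - (((m:ℝ)+1)/(M+1))^2/2)) (i:ℕ) := by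
    intro i
    simp only [uu, vv, eqPts, Nat.add_sub_cancel]
    push_cast
    ring_nf
  rw [Finset.sum_congr rfl (fun i _ => key i),
      Fin.sum_univ_eq_sum_range (fun m => (if m = M then (1:ℝ)/(2*(M+1)) else 1/(M+1)) *
        (((m:ℝ)+1)/(M+1) - (((m:ℝ)+1)/(M+1))^2/2)) (M+1), Finset.sum_range_succ]
  have congr1 : ∀ m ∈ range M,
      (if m = M then (1:ℝ)/(2*(M+1)) else 1/(M+1)) *
        (((m:ℝ)+1)/(M+1) - (((m:ℝ)+1)/(M+1))^2/2)
      = ((m:ℝ)+1) * (1/((M+1)^2)) - ((m:ℝ)+1)^2 * (1/(2*((M+1))^3)) := by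
    intro m hm
    rw [if_neg (Nat.ne_of_lt (Finset.mem_range.mp hm))]
    field_simp
  rw [Finset.sum_congr rfl congr1, Finset.sum_sub_distrib, ← Finset.sum_mul,
      ← Finset.sum_mul, sum_succ_real, sum_succ_sq_real, if_pos rfl]
  push_cast
  field_simp
  ring

end BQ17

end BQHelpers


/-- For the Brownian motion kernel `K(s,t) = min{s,t}` on `[0,1]`,
weight `w ≡ 1`, and the equispaced points `X_N = {1/N, …, 1}`, the Bayesian quadrature
integral variance is `V_{X_N} = ∫₀¹ ∫₀¹ P_{X_N}(s,t) ds dt = 1/(12 N²)`. -/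
theorem brownian_quadV_eq (N : ℕ) (hN : 0 < N) :
    quadV1 bmK (eqPts N) = 1 / (12 * (N : ℝ) ^ 2) := by
  classical
  have hmin_int : ∀ a : ℝ, IntegrableOn (fun t : ℝ => min a t) (Set.Icc (0:ℝ) 1) volume :=
    fun a => (continuous_const.min continuous_id).integrableOn_Icc
  have expand : ∀ s t : ℝ, condCov1 bmK (eqPts N) s t
      = min s t - ∑ j, ((kvec1 bmK (eqPts N) s) ᵥ* (kernelMatrix1 bmK (eqPts N))⁻¹) j *
          min (eqPts N j) t := by
    intro s t
    rw [condCov1, Matrix.dotProduct_mulVec]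
    simp only [dotProduct, kvec1, bmK]
    congr 1
    exact Finset.sum_congr rfl fun j _ => by rw [min_comm]
  have inner : Set.EqOn (fun s => ∫ t in Set.Icc (0:ℝ) 1, condCov1 bmK (eqPts N) s t)
      (fun s => (s - s^2/2) - ∑ i, BQ17.uu N i * min (eqPts N i) s) (Set.Icc (0:ℝ) 1) := by
    intro s hs
    simp only
    simp_rw [expand s]
    rw [MeasureTheory.integral_sub (hmin_int s)
        (MeasureTheory.integrable_finset_sum _ fun j _ => (hmin_int (eqPts N j)).const_mul _),
      MeasureTheory.integral_finset_sum _ (fun j _ => (hmin_int (eqPts N j)).const_mul _)]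
    have e1 : ∀ j : Fin N, (∫ t in Set.Icc (0:ℝ) 1,
          (kvec1 bmK (eqPts N) s ᵥ* (kernelMatrix1 bmK (eqPts N))⁻¹) j * min (eqPts N j) t)
        = (kvec1 bmK (eqPts N) s ᵥ* (kernelMatrix1 bmK (eqPts N))⁻¹) j * BQ17.vv N j := by
      intro j
      rw [MeasureTheory.integral_const_mul, BQ17.int_min _ (BQ17.eqPts_mem hN j)]
      rfl
    rw [Finset.sum_congr rfl fun j _ => e1 j, BQ17.int_min s hs]
    congr 1
    have e2 : ∑ j, (kvec1 bmK (eqPts N) s ᵥ* (kernelMatrix1 bmK (eqPts N))⁻¹) j * BQ17.vv N j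
        = kvec1 bmK (eqPts N) s ⬝ᵥ ((kernelMatrix1 bmK (eqPts N))⁻¹ *ᵥ BQ17.vv N) := by
      rw [Matrix.dotProduct_mulVec]; rfl
    rw [e2, BQ17.inv_mulVec_vv hN]
    simp only [dotProduct, kvec1, bmK]
    exact Finset.sum_congr rfl fun i _ => by rw [min_comm, mul_comm]
  rw [quadV1, MeasureTheory.setIntegral_congr_fun measurableSet_Icc inner]
  have hpoly_int : IntegrableOn (fun s : ℝ => s - s^2/2) (Set.Icc (0:ℝ) 1) volume :=
    (continuous_id.sub ((continuous_pow 2).div_const 2)).integrableOn_Icc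
  rw [MeasureTheory.integral_sub hpoly_int
      (MeasureTheory.integrable_finset_sum _ fun i _ => (hmin_int (eqPts N i)).const_mul _),
    MeasureTheory.integral_finset_sum _ (fun i _ => (hmin_int (eqPts N i)).const_mul _),
    BQ17.int_poly]
  have e3 : ∀ i : Fin N, (∫ s in Set.Icc (0:ℝ) 1, BQ17.uu N i * min (eqPts N i) s)
      = BQ17.uu N i * BQ17.vv N i := by
    intro i
    rw [MeasureTheory.integral_const_mul, BQ17.int_min _ (BQ17.eqPts_mem hN i)]
    rfl
  rw [Finset.sum_congr rfl fun i _ => e3 i, BQ17.sum_vu hN]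
  ring

end
end

section
/- Let K(x,y) = min{x,y} be the Brownian motion kernel on [0,1], let w ≡ 1, and let X_N = {1/N, 2/N, …, 1}. Suppose f : [0,1] → ℝ is twice differentiable with bounded second derivative, f(0) = 0, and f(1) ≠ 0. Then the Bayesian quadrature standard score satisfies |I(f) − Q_{X_N}(f)| / R_BC(f,X_N) ≤ sup_{x ∈ [0,1]} |f''(x)| / (√12 · N · σ_ML(f,X_N)) ≲ N^{−1/2}. If furthermore there is c > 0 with f''(x) > c for all x ∈ [0,1], then also |I(f) − Q_{X_N}(f)| / R_BC(f,X_N) ≳ N^{−1/2}. -/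
open MeasureTheory Filter Matrix Real Function
open scoped BigOperators Topology

noncomputable section
namespace BTS

def Bmat (N : ℕ) : Matrix (Fin N) (Fin N) ℝ :=
  Matrix.of fun i j => if (i:ℕ) = (j:ℕ) then 1 else if (i:ℕ) = (j:ℕ)+1 then -1 else 0

def Lmat (N : ℕ) : Matrix (Fin N) (Fin N) ℝ :=
  Matrix.of fun i j => if (j:ℕ) ≤ (i:ℕ) then 1 else 0

lemma BL {N : ℕ} : Bmat N * Lmat N = 1 := by
  ext i j
  rw [Matrix.mul_apply, Matrix.one_apply]
  have hsplit : ∀ k : Fin N, Bmat N i k * Lmat N k j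
      = (if k = i then (if (j:ℕ) ≤ (i:ℕ) then (1:ℝ) else 0) else 0)
      + (if (i:ℕ) = (k:ℕ)+1 then -(if (j:ℕ) ≤ (k:ℕ) then (1:ℝ) else 0) else 0) := by
    intro k
    simp only [Bmat, Lmat, Matrix.of_apply, Fin.ext_iff]
    split_ifs
    all_goals try (exfalso; omega)
    all_goals ring
  rw [Finset.sum_congr rfl (fun k _ => hsplit k), Finset.sum_add_distrib,
    Finset.sum_ite_eq' Finset.univ i, if_pos (Finset.mem_univ i)]
  rcases Nat.eq_zero_or_pos (i:ℕ) with hi | hi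
  · rw [Finset.sum_eq_zero (fun k _ => by rw [if_neg (fun h => by omega)])]
    simp only [Fin.ext_iff]
    split_ifs
    all_goals try (exfalso; omega)
    all_goals norm_num
  · have hiN : (i:ℕ) - 1 < N := by omega
    rw [Finset.sum_eq_single (⟨(i:ℕ)-1, hiN⟩ : Fin N)
      (fun k _ hk => if_neg (fun h => hk (Fin.ext (show (k:ℕ) = (i:ℕ)-1 by omega))))
      (fun h => absurd (Finset.mem_univ _) h),
      if_pos (show (i:ℕ) = ((⟨(i:ℕ)-1, hiN⟩ : Fin N):ℕ)+1 from by
        show (i:ℕ) = (i:ℕ)-1+1; omega)]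
    have hv : ((⟨(i:ℕ)-1, hiN⟩ : Fin N) : ℕ) = (i:ℕ)-1 := rfl
    rw [hv]
    simp only [Fin.ext_iff]
    split_ifs
    all_goals try (exfalso; omega)
    all_goals norm_num

lemma LB {N : ℕ} : Lmat N * Bmat N = 1 := mul_eq_one_comm.mp BL


lemma kermat_eq {N : ℕ} (hN : 0 < N) :
    kernelMatrix1 bmK (eqPts N) = ((N:ℝ)⁻¹) • (Lmat N * (Lmat N)ᵀ) := by
  ext i j
  have hNR : (0:ℝ) < N := Nat.cast_pos.mpr hN
  have hsum : ∀ k : Fin N, Lmat N i k * (Lmat N)ᵀ k j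
      = (if (k:ℕ) ≤ min (i:ℕ) (j:ℕ) then (1:ℝ) else 0) := by
    intro k
    simp only [Lmat, Matrix.transpose_apply, Matrix.of_apply]
    split_ifs
    all_goals try (exfalso; omega)
    all_goals norm_num
  have h2 : ∑ k : Fin N, Lmat N i k * (Lmat N)ᵀ k j = ((min (i:ℕ) (j:ℕ) : ℕ) + 1 : ℝ) := by
    rw [Finset.sum_congr rfl (fun k _ => hsum k), Fin.sum_univ_eq_sum_range
      (fun k => if k ≤ min (i:ℕ) (j:ℕ) then (1:ℝ) else 0), Finset.sum_boole]
    have hfil : (Finset.range N).filter (fun k => k ≤ min (i:ℕ) (j:ℕ))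
        = Finset.range (min (i:ℕ) (j:ℕ) + 1) := by
      ext k
      simp only [Finset.mem_filter, Finset.mem_range]
      have hi := i.isLt; have hj := j.isLt
      constructor
      · rintro ⟨-, h⟩; omega
      · intro h; constructor <;> omega
    rw [hfil, Finset.card_range]
    push_cast; ring
  rw [Matrix.smul_apply, Matrix.mul_apply, h2]
  simp only [kernelMatrix1, Matrix.of_apply, bmK, eqPts, smul_eq_mul]
  rw [min_div_div_right hNR.le, Nat.cast_min, ← min_add_add_right, inv_mul_eq_div]

lemma kinv_eq {N : ℕ} (hN : 0 < N) :
    (kernelMatrix1 bmK (eqPts N))⁻¹ = (N:ℝ) • ((Bmat N)ᵀ * Bmat N) := by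
  have hNR : ((N:ℝ)) ≠ 0 := Nat.cast_ne_zero.mpr hN.ne'
  apply Matrix.inv_eq_right_inv
  rw [kermat_eq hN, Matrix.smul_mul, Matrix.mul_smul, smul_smul, inv_mul_cancel₀ hNR, one_smul]
  calc (Lmat N * (Lmat N)ᵀ) * ((Bmat N)ᵀ * Bmat N)
      = Lmat N * (((Lmat N)ᵀ * (Bmat N)ᵀ) * Bmat N) := by
        rw [Matrix.mul_assoc, Matrix.mul_assoc]
    _ = Lmat N * ((Bmat N * Lmat N)ᵀ * Bmat N) := by rw [Matrix.transpose_mul]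
    _ = Lmat N * Bmat N := by rw [BL, Matrix.transpose_one, Matrix.one_mul]
    _ = 1 := LB

lemma dotform {N : ℕ} (hN : 0 < N) (u v : Fin N → ℝ) :
    u ⬝ᵥ ((kernelMatrix1 bmK (eqPts N))⁻¹ *ᵥ v)
      = N * ((Bmat N *ᵥ u) ⬝ᵥ (Bmat N *ᵥ v)) := by
  rw [kinv_eq hN, Matrix.smul_mulVec, dotProduct_smul,
    ← Matrix.mulVec_mulVec, dotProduct_mulVec, Matrix.vecMul_transpose]
  simp [smul_eq_mul]

lemma Bvec_apply {N : ℕ} (u : Fin N → ℝ) (G : ℕ → ℝ) (hG0 : G 0 = 0)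
    (hG : ∀ i : Fin N, u i = G ((i:ℕ)+1)) (i : Fin N) :
    (Bmat N *ᵥ u) i = G ((i:ℕ)+1) - G (i:ℕ) := by
  rw [Matrix.mulVec, dotProduct]
  have hsplit : ∀ k : Fin N, Bmat N i k * u k
      = (if k = i then G ((i:ℕ)+1) else 0)
      + (if (i:ℕ) = (k:ℕ)+1 then -(G ((k:ℕ)+1)) else 0) := by
    intro k
    rw [hG k]
    by_cases h1 : (i:ℕ) = (k:ℕ)
    · have hki : k = i := Fin.ext h1.symm
      rw [if_pos hki, if_neg (by omega), Bmat]
      simp only [Matrix.of_apply, if_pos h1]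
      rw [h1]; ring
    · by_cases h2 : (i:ℕ) = (k:ℕ)+1
      · rw [if_neg (fun hk => h1 (by rw [hk])), if_pos h2, Bmat]
        simp only [Matrix.of_apply, if_neg h1, if_pos h2]; ring
      · rw [if_neg (fun hk => h1 (by rw [hk])), if_neg h2, Bmat]
        simp only [Matrix.of_apply, if_neg h1, if_neg h2]; ring
  rw [Finset.sum_congr rfl (fun k _ => hsplit k), Finset.sum_add_distrib,
    Finset.sum_ite_eq' Finset.univ i, if_pos (Finset.mem_univ i)]
  rcases Nat.eq_zero_or_pos (i:ℕ) with hi | hi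
  · rw [Finset.sum_eq_zero (fun k _ => if_neg (fun h => by omega)), hi, hG0]
    ring
  · have hiN : (i:ℕ) - 1 < N := by omega
    rw [Finset.sum_eq_single (⟨(i:ℕ)-1, hiN⟩ : Fin N)
      (fun k _ hk => if_neg (fun h => hk (Fin.ext (show (k:ℕ) = (i:ℕ)-1 by omega))))
      (fun h => absurd (Finset.mem_univ _) h),
      if_pos (show (i:ℕ) = (((⟨(i:ℕ)-1, hiN⟩:Fin N)):ℕ)+1 from by
        show (i:ℕ) = (i:ℕ)-1+1; omega)]
    have hv : (((⟨(i:ℕ)-1, hiN⟩:Fin N)):ℕ) = (i:ℕ)-1 := rfl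
    rw [hv, show (i:ℕ)-1+1 = (i:ℕ) from by omega]
    ring



variable {N : ℕ} {f : ℝ → ℝ}

lemma Bf_apply (hf0 : f 0 = 0) (i : Fin N) :
    (Bmat N *ᵥ fvec1 f (eqPts N)) i = f (((i:ℕ)+1)/N) - f ((i:ℕ)/N) := by
  have h := Bvec_apply (fvec1 f (eqPts N)) (fun n => f ((n:ℝ)/N)) (by simp [hf0])
    (fun i => by simp [fvec1, eqPts]) i
  push_cast at h
  exact h

lemma Bk_apply {t : ℝ} (ht : 0 ≤ t) (i : Fin N) :
    (Bmat N *ᵥ kvec1 bmK (eqPts N) t) i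
      = min t (((i:ℕ)+1)/N) - min t ((i:ℕ)/N) := by
  have h := Bvec_apply (kvec1 bmK (eqPts N) t) (fun n => min t ((n:ℝ)/N))
    (by simp [min_eq_right ht]) (fun i => by simp [kvec1, bmK, eqPts]) i
  push_cast at h
  exact h

lemma quadForm_eq (hN : 0 < N) (hf0 : f 0 = 0) :
    quadForm1 bmK f (eqPts N)
      = N * ∑ i : Fin N, (f (((i:ℕ)+1)/N) - f ((i:ℕ)/N))^2 := by
  rw [quadForm1, dotform hN, dotProduct]
  congr 1
  refine Finset.sum_congr rfl (fun i _ => ?_)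
  rw [Bf_apply hf0]; ring

lemma condMean_eq (hN : 0 < N) (hf0 : f 0 = 0) {t : ℝ} (ht : 0 ≤ t) :
    condMean1 bmK (eqPts N) f t
      = N * ∑ i : Fin N, (min t (((i:ℕ)+1)/N) - min t ((i:ℕ)/N))
          * (f (((i:ℕ)+1)/N) - f ((i:ℕ)/N)) := by
  rw [condMean1, dotform hN, dotProduct]
  congr 1
  refine Finset.sum_congr rfl (fun i _ => ?_)
  rw [Bf_apply hf0, Bk_apply ht]

lemma condCov_eq (hN : 0 < N) {s t : ℝ} (hs : 0 ≤ s) (ht : 0 ≤ t) :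
    condCov1 bmK (eqPts N) s t
      = min s t - N * ∑ i : Fin N, (min s (((i:ℕ)+1)/N) - min s ((i:ℕ)/N))
          * (min t (((i:ℕ)+1)/N) - min t ((i:ℕ)/N)) := by
  rw [condCov1, dotform hN, dotProduct]
  congr 2
  refine Finset.sum_congr rfl (fun i _ => ?_)
  rw [Bk_apply hs, Bk_apply ht]

lemma icc_int (g : ℝ → ℝ) :
    ∫ t in Set.Icc (0:ℝ) 1, g t = ∫ t in (0:ℝ)..1, g t := by
  rw [MeasureTheory.integral_Icc_eq_integral_Ioc, intervalIntegral.integral_of_le zero_le_one]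

lemma int_min {c : ℝ} (h0 : 0 ≤ c) (h1 : c ≤ 1) :
    ∫ t in (0:ℝ)..1, min t c = c - c^2/2 := by
  have hcont : Continuous (fun t : ℝ => min t c) := continuous_id.min continuous_const
  rw [← intervalIntegral.integral_add_adjacent_intervals (a := 0) (b := c) (c := 1)
      (hcont.intervalIntegrable _ _) (hcont.intervalIntegrable _ _)]
  have e1 : ∫ t in (0:ℝ)..c, min t c = ∫ t in (0:ℝ)..c, t := by
    apply intervalIntegral.integral_congr
    intro t ht
    rw [Set.uIcc_of_le h0] at ht
    exact min_eq_left ht.2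
  have e2 : ∫ t in c..(1:ℝ), min t c = ∫ t in c..(1:ℝ), c := by
    apply intervalIntegral.integral_congr
    intro t ht
    rw [Set.uIcc_of_le h1] at ht
    exact min_eq_right ht.1
  rw [e1, e2, integral_id, intervalIntegral.integral_const]
  simp only [smul_eq_mul]; ring

lemma int_Dk {a b : ℝ} (h0 : 0 ≤ a) (hab : a ≤ b) (h1 : b ≤ 1) :
    ∫ t in Set.Icc (0:ℝ) 1, (min t b - min t a) = (b - b^2/2) - (a - a^2/2) := by
  have hca : Continuous (fun t : ℝ => min t a) := continuous_id.min continuous_const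
  have hcb : Continuous (fun t : ℝ => min t b) := continuous_id.min continuous_const
  rw [icc_int, intervalIntegral.integral_sub (hcb.intervalIntegrable _ _)
    (hca.intervalIntegrable _ _), int_min (h0.trans hab) h1, int_min h0 (hab.trans h1)]

lemma quadQ_eq (hN : 0 < N) (hf0 : f 0 = 0) :
    quadQ1 bmK (eqPts N) f
      = N * ∑ i : Fin N, (f (((i:ℕ)+1)/N) - f ((i:ℕ)/N))
          * (((((i:ℕ)+1)/N) - (((i:ℕ)+1)/N)^2/2) - (((i:ℕ)/N) - ((i:ℕ)/N)^2/2)) := by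
  have hNR : (0:ℝ) < N := Nat.cast_pos.mpr hN
  have hb1 : ∀ i : Fin N, (((i:ℕ)+1:ℝ))/N ≤ 1 := by
    intro i
    rw [div_le_one hNR]
    exact_mod_cast Nat.succ_le_of_lt i.isLt
  have ha0 : ∀ i : Fin N, (0:ℝ) ≤ (i:ℕ)/N := fun i => by positivity
  have hab : ∀ i : Fin N, ((i:ℕ):ℝ)/N ≤ (((i:ℕ)+1:ℝ))/N := fun i => by
    exact (div_le_div_iff_of_pos_right hNR).mpr (by linarith)
  rw [quadQ1, MeasureTheory.setIntegral_congr_fun measurableSet_Icc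
    (fun t ht => condMean_eq hN hf0 ht.1), MeasureTheory.integral_const_mul]
  congr 1
  rw [MeasureTheory.integral_finset_sum _ (fun i _ => by
    apply Continuous.integrableOn_Icc
    continuity)]
  refine Finset.sum_congr rfl (fun i _ => ?_)
  rw [MeasureTheory.integral_mul_const, int_Dk (ha0 i) (hab i) (hb1 i)]
  ring

lemma sum_Df (hN : 0 < N) (hf0 : f 0 = 0) :
    ∑ i : Fin N, (f ((((i:ℕ):ℝ)+1)/N) - f (((i:ℕ):ℝ)/N)) = f 1 := by
  have h := Finset.sum_range_sub (f := fun n : ℕ => f ((n:ℝ)/N)) (n := N)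
  rw [Fin.sum_univ_eq_sum_range (fun n : ℕ => f (((n:ℝ)+1)/N) - f ((n:ℝ)/N))]
  have e : ∀ n : ℕ, f (((n:ℝ)+1)/N) - f ((n:ℝ)/N)
      = f (((n+1:ℕ):ℝ)/N) - f ((n:ℝ)/N) := fun n => by push_cast; ring_nf
  rw [Finset.sum_congr rfl (fun n _ => e n), h, Nat.cast_zero, zero_div, hf0,
    div_self (Nat.cast_ne_zero.mpr hN.ne' : ((N:ℕ):ℝ) ≠ 0), sub_zero]

lemma quadQ_trap (hN : 0 < N) (hf0 : f 0 = 0) :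
    quadQ1 bmK (eqPts N) f
      = ∑ i ∈ Finset.range N, (f ((i:ℝ)/N) + f (((i:ℝ)+1)/N)) / (2*N) := by
  have hNR : (0:ℝ) < N := Nat.cast_pos.mpr hN
  have hNR' : ((N:ℕ):ℝ) ≠ 0 := hNR.ne'
  rw [quadQ_eq hN hf0, Finset.mul_sum,
    Fin.sum_univ_eq_sum_range (fun n : ℕ => (N:ℝ) * ((f (((n:ℝ)+1)/N) - f ((n:ℝ)/N))
      * (((((n:ℝ)+1)/N) - (((n:ℝ)+1)/N)^2/2) - (((n:ℝ)/N) - ((n:ℝ)/N)^2/2))))]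
  have key : ∀ i ∈ Finset.range N,
      (N:ℝ) * ((f (((i:ℝ)+1)/N) - f ((i:ℝ)/N))
        * (((((i:ℝ)+1)/N) - (((i:ℝ)+1)/N)^2/2) - (((i:ℝ)/N) - ((i:ℝ)/N)^2/2)))
      = (f ((i:ℝ)/N) + f (((i:ℝ)+1)/N)) / (2*N)
        + ((fun n : ℕ => f ((n:ℝ)/N) * (1 - (n:ℝ)/N)) (i+1)
          - (fun n : ℕ => f ((n:ℝ)/N) * (1 - (n:ℝ)/N)) i) := by
    intro i _
    have e : ((i+1:ℕ):ℝ) = (i:ℝ)+1 := by push_cast; ring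
    simp only [e]
    field_simp
    ring
  rw [Finset.sum_congr rfl key, Finset.sum_add_distrib, Finset.sum_range_sub
    (f := fun n : ℕ => f ((n:ℝ)/N) * (1 - (n:ℝ)/N))]
  simp only [Nat.cast_zero, zero_div, hf0, div_self hNR', sub_self, mul_zero, zero_mul,
    mul_one, sub_zero, zero_sub, neg_zero, add_zero]

lemma intF_split (hN : 0 < N) (hc : ContinuousOn f (Set.Icc 0 1)) :
    intF1 f = ∑ i ∈ Finset.range N, ∫ t in ((i:ℝ)/N)..(((i:ℝ)+1)/N), f t := by
  have hNR : (0:ℝ) < N := Nat.cast_pos.mpr hN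
  have hint : ∀ k < N, IntervalIntegrable f volume ((k:ℝ)/N) (((k+1:ℕ):ℝ)/N) := by
    intro k hk
    apply ContinuousOn.intervalIntegrable
    apply hc.mono
    rw [Set.uIcc_of_le ((div_le_div_iff_of_pos_right hNR).mpr (by push_cast; linarith))]
    apply Set.Icc_subset_Icc (by positivity)
    rw [div_le_one hNR]
    exact_mod_cast Nat.cast_le.mpr hk
  have key := intervalIntegral.sum_integral_adjacent_intervals (a := fun n : ℕ => (n:ℝ)/N)
    (n := N) (fun k hk => hint k hk)
  have e0 : (((0:ℕ)):ℝ)/(N:ℝ) = 0 := by simp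
  have e1 : (((N:ℕ)):ℝ)/(N:ℝ) = 1 := div_self (Nat.cast_ne_zero.mpr hN.ne')
  rw [e0, e1] at key
  rw [intF1, icc_int, ← key]
  refine Finset.sum_congr rfl (fun i _ => ?_)
  have e : ((i+1:ℕ):ℝ) = (i:ℝ)+1 := by push_cast; ring
  simp only [e]

lemma ii_bdd {g : ℝ → ℝ} {a b M : ℝ} (hab : a ≤ b) (hm : Measurable g)
    (hM : ∀ t ∈ Set.Icc a b, |g t| ≤ M) : IntervalIntegrable g volume a b := by
  rw [intervalIntegrable_iff_integrableOn_Icc_of_le hab]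
  apply MeasureTheory.Measure.integrableOn_of_bounded (M := M) measure_Icc_lt_top.ne
    hm.aestronglyMeasurable
  rw [MeasureTheory.ae_restrict_iff' measurableSet_Icc]
  exact MeasureTheory.ae_of_all _ (fun t ht => by rw [Real.norm_eq_abs]; exact hM t ht)

lemma int_phi {a b : ℝ} (hab : a ≤ b) :
    ∫ t in a..b, (t-a)*(b-t)/2 = (b-a)^3/12 := by
  have hF : ∀ t ∈ Set.uIcc a b, HasDerivAt
      (fun x : ℝ => -(x^3/6) + (a+b)/4*x^2 - a*b/2*x) ((t-a)*(b-t)/2) t := by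
    intro t _
    have h1 := (((hasDerivAt_pow 3 t).div_const 6).neg.add
      ((hasDerivAt_pow 2 t).const_mul ((a+b)/4))).sub
      ((hasDerivAt_id' (x := t)).const_mul (a*b/2))
    exact h1.congr_deriv (by norm_num; ring)
  rw [intervalIntegral.integral_eq_sub_of_hasDerivAt hF (by
    apply Continuous.intervalIntegrable; continuity)]
  ring

lemma parts (hd1 : ∀ t ∈ Set.Icc (0:ℝ) 1, DifferentiableAt ℝ f t)
    (hd2 : ∀ t ∈ Set.Icc (0:ℝ) 1, DifferentiableAt ℝ (deriv f) t)
    {M : ℝ} (hM : ∀ t ∈ Set.Icc (0:ℝ) 1, |deriv (deriv f) t| ≤ M)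
    {a b : ℝ} (h0 : 0 ≤ a) (hab : a ≤ b) (h1 : b ≤ 1) :
    ∫ t in a..b, f t = (b-a)*(f a + f b)/2
      - ∫ t in a..b, deriv (deriv f) t * ((t-a)*(b-t)/2) := by
  have hsub : Set.uIcc a b ⊆ Set.Icc (0:ℝ) 1 := by
    rw [Set.uIcc_of_le hab]; exact Set.Icc_subset_Icc h0 h1
  have hφ : ∀ x ∈ Set.uIcc a b, HasDerivAt (fun t : ℝ => (t-a)*(b-t)/2) ((a+b)/2 - x) x := by
    intro x _
    have h := (((hasDerivAt_id' (x := x)).sub_const a).mul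
      ((hasDerivAt_const x b).sub (hasDerivAt_id' (x := x)))).div_const 2
    exact h.congr_deriv (by simp only [Pi.sub_apply]; ring)
  have hφ' : ∀ x ∈ Set.uIcc a b, HasDerivAt (fun t : ℝ => (a+b)/2 - t) (-1 : ℝ) x := by
    intro x _
    exact ((hasDerivAt_const x ((a+b)/2)).sub (hasDerivAt_id' (x := x))).congr_deriv (by norm_num)
  have hf' : ∀ x ∈ Set.uIcc a b, HasDerivAt f (deriv f x) x :=
    fun x hx => (hd1 x (hsub hx)).hasDerivAt
  have hf'' : ∀ x ∈ Set.uIcc a b, HasDerivAt (deriv f) (deriv (deriv f) x) x :=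
    fun x hx => (hd2 x (hsub hx)).hasDerivAt
  have hcf' : ContinuousOn (deriv f) (Set.uIcc a b) :=
    fun x hx => ((hd2 x (hsub hx)).continuousAt).continuousWithinAt
  have i1 : IntervalIntegrable (fun t => deriv (deriv f) t) volume a b :=
    ii_bdd hab (measurable_deriv _) (fun t ht => hM t (hsub (by rwa [Set.uIcc_of_le hab])))
  have i2 : IntervalIntegrable (fun t : ℝ => (a+b)/2 - t) volume a b :=
    (by continuity : Continuous (fun t : ℝ => (a+b)/2 - t)).intervalIntegrable _ _
  have i3 : IntervalIntegrable (deriv f) volume a b := hcf'.intervalIntegrable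
  have hcf : ContinuousOn f (Set.uIcc a b) :=
    fun x hx => ((hd1 x (hsub hx)).continuousAt).continuousWithinAt
  have i4 : IntervalIntegrable f volume a b := hcf.intervalIntegrable
  have ic : IntervalIntegrable (fun _ : ℝ => (-1:ℝ)) volume a b :=
    intervalIntegrable_const
  have step1 := intervalIntegral.integral_mul_deriv_eq_deriv_mul hφ hf'' i2 i1
  have step2 := intervalIntegral.integral_mul_deriv_eq_deriv_mul hφ' hf' ic i3
  have hφa : (a-a)*(b-a)/2 = 0 := by ring
  have e1 : ∫ t in a..b, deriv (deriv f) t * ((t-a)*(b-t)/2)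
      = ∫ t in a..b, ((t-a)*(b-t)/2) * deriv (deriv f) t :=
    intervalIntegral.integral_congr (fun t _ => mul_comm _ _)
  have e2 : ∫ t in a..b, ((a+b)/2 - t) * deriv f t = ∫ t in a..b, (fun t => (a+b)/2 - t) t * deriv f t := rfl
  have e3 : ∫ t in a..b, (-1 : ℝ) * f t = -∫ t in a..b, f t := by
    rw [show (fun t : ℝ => (-1:ℝ) * f t) = fun t => -(f t) from funext (fun t => by ring)]
    exact intervalIntegral.integral_neg
  rw [e1, step1]
  rw [step2, e3] 
  ring_nf

lemma err_repr (hN : 0 < N) (hf0 : f 0 = 0)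
    (hd1 : ∀ t ∈ Set.Icc (0:ℝ) 1, DifferentiableAt ℝ f t)
    (hd2 : ∀ t ∈ Set.Icc (0:ℝ) 1, DifferentiableAt ℝ (deriv f) t)
    {M : ℝ} (hM : ∀ t ∈ Set.Icc (0:ℝ) 1, |deriv (deriv f) t| ≤ M) :
    intF1 f - quadQ1 bmK (eqPts N) f
      = -∑ i ∈ Finset.range N, ∫ t in ((i:ℝ)/N)..(((i:ℝ)+1)/N),
          deriv (deriv f) t * ((t - (i:ℝ)/N)*((((i:ℝ)+1)/N) - t)/2) := by
  have hNR : (0:ℝ) < N := Nat.cast_pos.mpr hN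
  have hc : ContinuousOn f (Set.Icc 0 1) :=
    fun x hx => ((hd1 x hx).continuousAt).continuousWithinAt
  rw [intF_split hN hc, quadQ_trap hN hf0, ← Finset.sum_sub_distrib, ← Finset.sum_neg_distrib]
  refine Finset.sum_congr rfl (fun i hi => ?_)
  have h0 : (0:ℝ) ≤ (i:ℝ)/N := by positivity
  have hab : (i:ℝ)/N ≤ ((i:ℝ)+1)/N := (div_le_div_iff_of_pos_right hNR).mpr (by linarith)
  have h1 : ((i:ℝ)+1)/N ≤ 1 := by
    rw [div_le_one hNR]
    exact_mod_cast Nat.succ_le_of_lt (Finset.mem_range.mp hi)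
  rw [parts hd1 hd2 hM h0 hab h1,
    show (((i:ℝ)+1)/N - (i:ℝ)/N) = 1/N from by field_simp; ring]
  ring

lemma int_bound
    {M : ℝ} (hM : ∀ t ∈ Set.Icc (0:ℝ) 1, |deriv (deriv f) t| ≤ M)
    {a b : ℝ} (h0 : 0 ≤ a) (hab : a ≤ b) (h1 : b ≤ 1) :
    IntervalIntegrable (fun t => deriv (deriv f) t * ((t-a)*(b-t)/2)) volume a b
    ∧ |∫ t in a..b, deriv (deriv f) t * ((t-a)*(b-t)/2)| ≤ M * (b-a)^3/12
    ∧ (∀ c : ℝ, (∀ t ∈ Set.Icc (0:ℝ) 1, c < deriv (deriv f) t) →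
        c * (b-a)^3/12 ≤ ∫ t in a..b, deriv (deriv f) t * ((t-a)*(b-t)/2)) := by
  have hM0 : 0 ≤ M := le_trans (abs_nonneg _) (hM 0 (by norm_num))
  have hsub : Set.Icc a b ⊆ Set.Icc (0:ℝ) 1 := Set.Icc_subset_Icc h0 h1
  have hφc : Continuous (fun t : ℝ => (t-a)*(b-t)/2) := by continuity
  have hφ0 : ∀ t ∈ Set.Icc a b, 0 ≤ (t-a)*(b-t)/2 := by
    intro t ht
    have := ht.1; have := ht.2
    nlinarith
  have hφ1 : ∀ t ∈ Set.Icc a b, |(t-a)*(b-t)/2| ≤ 1 := by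
    intro t ht
    rw [abs_of_nonneg (hφ0 t ht)]
    have h2 := ht.1; have h3 := ht.2
    nlinarith [h0.trans h2, h3.trans h1]
  have hii : IntervalIntegrable (fun t => deriv (deriv f) t * ((t-a)*(b-t)/2)) volume a b := by
    apply ii_bdd (M := M) hab ((measurable_deriv _).mul hφc.measurable)
    intro t ht
    rw [Pi.mul_apply, abs_mul]
    calc |deriv (deriv f) t| * |(t-a)*(b-t)/2| ≤ M * 1 :=
      mul_le_mul (hM t (hsub ht)) (hφ1 t ht) (abs_nonneg _) hM0
    _ = M := mul_one M
  refine ⟨hii, ?_, ?_⟩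
  · calc |∫ t in a..b, deriv (deriv f) t * ((t-a)*(b-t)/2)|
        ≤ ∫ t in a..b, |deriv (deriv f) t * ((t-a)*(b-t)/2)| :=
          intervalIntegral.abs_integral_le_integral_abs hab
      _ ≤ ∫ t in a..b, M * ((t-a)*(b-t)/2) := by
          apply intervalIntegral.integral_mono_on hab hii.abs
            ((continuous_const.mul hφc).intervalIntegrable _ _)
          intro t ht
          rw [abs_mul, abs_of_nonneg (hφ0 t ht)]
          exact mul_le_mul_of_nonneg_right (hM t (hsub ht)) (hφ0 t ht)
      _ = M * (b-a)^3/12 := by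
          rw [intervalIntegral.integral_const_mul, int_phi hab]; ring
  · intro c hcc
    calc c * (b-a)^3/12 = ∫ t in a..b, c * ((t-a)*(b-t)/2) := by
          rw [intervalIntegral.integral_const_mul, int_phi hab]; ring
      _ ≤ ∫ t in a..b, deriv (deriv f) t * ((t-a)*(b-t)/2) := by
          apply intervalIntegral.integral_mono_on hab
            ((continuous_const.mul hφc).intervalIntegrable _ _) hii
          intro t ht
          exact mul_le_mul_of_nonneg_right (hcc t (hsub ht)).le (hφ0 t ht)

lemma err_abs_le (hN : 0 < N) (hf0 : f 0 = 0)
    (hd1 : ∀ t ∈ Set.Icc (0:ℝ) 1, DifferentiableAt ℝ f t)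
    (hd2 : ∀ t ∈ Set.Icc (0:ℝ) 1, DifferentiableAt ℝ (deriv f) t)
    {M : ℝ} (hM : ∀ t ∈ Set.Icc (0:ℝ) 1, |deriv (deriv f) t| ≤ M) :
    |intF1 f - quadQ1 bmK (eqPts N) f| ≤ M/(12*N^2) := by
  have hNR : (0:ℝ) < N := Nat.cast_pos.mpr hN
  rw [err_repr hN hf0 hd1 hd2 hM, abs_neg]
  calc |∑ i ∈ Finset.range N, ∫ t in ((i:ℝ)/N)..(((i:ℝ)+1)/N),
          deriv (deriv f) t * ((t - (i:ℝ)/N)*((((i:ℝ)+1)/N) - t)/2)|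
      ≤ ∑ i ∈ Finset.range N, |∫ t in ((i:ℝ)/N)..(((i:ℝ)+1)/N),
          deriv (deriv f) t * ((t - (i:ℝ)/N)*((((i:ℝ)+1)/N) - t)/2)| :=
        Finset.abs_sum_le_sum_abs _ _
    _ ≤ ∑ i ∈ Finset.range N, M * (1/(N:ℝ))^3/12 := by
        apply Finset.sum_le_sum
        intro i hi
        have h0 : (0:ℝ) ≤ (i:ℝ)/N := by positivity
        have hab : (i:ℝ)/N ≤ ((i:ℝ)+1)/N := (div_le_div_iff_of_pos_right hNR).mpr (by linarith)
        have h1 : ((i:ℝ)+1)/N ≤ 1 := by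
          rw [div_le_one hNR]
          exact_mod_cast Nat.succ_le_of_lt (Finset.mem_range.mp hi)
        have := (int_bound hM h0 hab h1).2.1
        rwa [show (((i:ℝ)+1)/N - (i:ℝ)/N) = 1/N from by field_simp; ring] at this
    _ = M/(12*N^2) := by
        rw [Finset.sum_const, Finset.card_range, nsmul_eq_mul]
        field_simp

lemma err_lower (hN : 0 < N) (hf0 : f 0 = 0)
    (hd1 : ∀ t ∈ Set.Icc (0:ℝ) 1, DifferentiableAt ℝ f t)
    (hd2 : ∀ t ∈ Set.Icc (0:ℝ) 1, DifferentiableAt ℝ (deriv f) t)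
    {M : ℝ} (hM : ∀ t ∈ Set.Icc (0:ℝ) 1, |deriv (deriv f) t| ≤ M)
    {c : ℝ} (hc : 0 < c) (hcc : ∀ t ∈ Set.Icc (0:ℝ) 1, c < deriv (deriv f) t) :
    c/(12*N^2) ≤ |intF1 f - quadQ1 bmK (eqPts N) f| := by
  have hNR : (0:ℝ) < N := Nat.cast_pos.mpr hN
  rw [err_repr hN hf0 hd1 hd2 hM, abs_neg]
  calc c/(12*N^2) = ∑ i ∈ Finset.range N, c * (1/(N:ℝ))^3/12 := by
        rw [Finset.sum_const, Finset.card_range, nsmul_eq_mul]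
        field_simp
    _ ≤ ∑ i ∈ Finset.range N, ∫ t in ((i:ℝ)/N)..(((i:ℝ)+1)/N),
          deriv (deriv f) t * ((t - (i:ℝ)/N)*((((i:ℝ)+1)/N) - t)/2) := by
        apply Finset.sum_le_sum
        intro i hi
        have h0 : (0:ℝ) ≤ (i:ℝ)/N := by positivity
        have hab : (i:ℝ)/N ≤ ((i:ℝ)+1)/N := (div_le_div_iff_of_pos_right hNR).mpr (by linarith)
        have h1 : ((i:ℝ)+1)/N ≤ 1 := by
          rw [div_le_one hNR]
          exact_mod_cast Nat.succ_le_of_lt (Finset.mem_range.mp hi)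
        have := (int_bound hM h0 hab h1).2.2 c hcc
        rwa [show (((i:ℝ)+1)/N - (i:ℝ)/N) = 1/N from by field_simp; ring] at this
    _ ≤ |∑ i ∈ Finset.range N, ∫ t in ((i:ℝ)/N)..(((i:ℝ)+1)/N),
          deriv (deriv f) t * ((t - (i:ℝ)/N)*((((i:ℝ)+1)/N) - t)/2)| := le_abs_self _

lemma sum_odd_sq (n : ℕ) : ∑ j ∈ Finset.range n, (2*(j:ℝ)+1)^2
    = (n:ℝ)*(4*(n:ℝ)^2-1)/3 := by
  induction n with
  | zero => norm_num
  | succ n ih => rw [Finset.sum_range_succ, ih]; push_cast; ring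

set_option maxHeartbeats 1000000 in
lemma quadV_eq (hN : 0 < N) : quadV1 bmK (eqPts N) = 1/(12*(N:ℝ)^2) := by
  have hNR : (0:ℝ) < N := Nat.cast_pos.mpr hN
  have hN0 : (N:ℝ) ≠ 0 := hNR.ne'
  have hb1 : ∀ i : Fin N, (((i:ℕ):ℝ)+1)/N ≤ 1 := by
    intro i
    rw [div_le_one hNR]
    exact_mod_cast Nat.succ_le_of_lt i.isLt
  have ha0 : ∀ i : Fin N, (0:ℝ) ≤ ((i:ℕ):ℝ)/N := fun i => by positivity
  have hab : ∀ i : Fin N, ((i:ℕ):ℝ)/N ≤ (((i:ℕ):ℝ)+1)/N := fun i =>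
    (div_le_div_iff_of_pos_right hNR).mpr (by linarith)
  set c : Fin N → ℝ := fun i =>
    ((((i:ℕ):ℝ)+1)/N - ((((i:ℕ):ℝ)+1)/N)^2/2) - (((i:ℕ):ℝ)/N - (((i:ℕ):ℝ)/N)^2/2) with hc
  have hDkcont : ∀ (i : Fin N), Continuous (fun t : ℝ =>
      min t ((((i:ℕ):ℝ)+1)/N) - min t (((i:ℕ):ℝ)/N)) := by
    intro i
    exact (continuous_id.min continuous_const).sub (continuous_id.min continuous_const)
  have hintDk : ∀ i : Fin N,
      ∫ t in Set.Icc (0:ℝ) 1, (min t ((((i:ℕ):ℝ)+1)/N) - min t (((i:ℕ):ℝ)/N)) = c i :=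
    fun i => int_Dk (ha0 i) (hab i) (hb1 i)
  have step1 : ∀ s ∈ Set.Icc (0:ℝ) 1,
      ∫ t in Set.Icc (0:ℝ) 1, condCov1 bmK (eqPts N) s t
        = (s - s^2/2) - N * ∑ i : Fin N,
            (min s ((((i:ℕ):ℝ)+1)/N) - min s (((i:ℕ):ℝ)/N)) * c i := by
    intro s hs
    rw [MeasureTheory.setIntegral_congr_fun measurableSet_Icc
      (fun t ht => condCov_eq hN hs.1 ht.1)]
    have ig1 : MeasureTheory.IntegrableOn (fun t : ℝ => min s t) (Set.Icc 0 1) volume :=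
      (continuous_const.min continuous_id' : Continuous fun t : ℝ => min s t).integrableOn_Icc
    have ig2 : MeasureTheory.IntegrableOn (fun t : ℝ => (N:ℝ) * ∑ i : Fin N,
        (min s ((((i:ℕ):ℝ)+1)/N) - min s (((i:ℕ):ℝ)/N))
          * (min t ((((i:ℕ):ℝ)+1)/N) - min t (((i:ℕ):ℝ)/N))) (Set.Icc 0 1) volume :=
      (continuous_const.mul (continuous_finset_sum _
        (fun i _ => continuous_const.mul (hDkcont i)))).integrableOn_Icc
    rw [MeasureTheory.integral_sub ig1 ig2]
    congr 1
    · rw [MeasureTheory.setIntegral_congr_fun measurableSet_Icc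
        (fun t (ht : t ∈ Set.Icc (0:ℝ) 1) => min_comm s t), icc_int, int_min hs.1 hs.2]
    · rw [MeasureTheory.integral_const_mul]
      congr 1
      rw [MeasureTheory.integral_finset_sum _ (fun i _ => by
        exact (continuous_const.mul (hDkcont i)).integrableOn_Icc)]
      refine Finset.sum_congr rfl (fun i _ => ?_)
      rw [MeasureTheory.integral_const_mul, hintDk i]
  have hOutCont : ∀ i : Fin N, Continuous (fun s : ℝ =>
      (min s ((((i:ℕ):ℝ)+1)/N) - min s (((i:ℕ):ℝ)/N)) * c i) :=
    fun i => (hDkcont i).mul continuous_const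
  have og1 : MeasureTheory.IntegrableOn (fun s : ℝ => s - s^2/2) (Set.Icc 0 1) volume :=
    (continuous_id'.sub ((continuous_pow 2).div_const 2)).integrableOn_Icc
  have og2 : MeasureTheory.IntegrableOn (fun s : ℝ => (N:ℝ) * ∑ i : Fin N,
      (min s ((((i:ℕ):ℝ)+1)/N) - min s (((i:ℕ):ℝ)/N)) * c i) (Set.Icc 0 1) volume :=
    (continuous_const.mul (continuous_finset_sum _ (fun i _ => hOutCont i))).integrableOn_Icc
  rw [quadV1, MeasureTheory.setIntegral_congr_fun measurableSet_Icc step1,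
    MeasureTheory.integral_sub og1 og2]
  have hfirst : ∫ s in Set.Icc (0:ℝ) 1, (s - s^2/2) = 1/3 := by
    rw [icc_int, intervalIntegral.integral_sub (continuous_id'.intervalIntegrable _ _)
      (((continuous_pow 2).div_const 2).intervalIntegrable _ _), integral_id,
      intervalIntegral.integral_div, integral_pow]
    norm_num
  have hsecond : ∫ s in Set.Icc (0:ℝ) 1,
      ((N:ℝ) * ∑ i : Fin N, (min s ((((i:ℕ):ℝ)+1)/N) - min s (((i:ℕ):ℝ)/N)) * c i)
      = N * ∑ i : Fin N, c i * c i := by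
    rw [MeasureTheory.integral_const_mul]
    congr 1
    rw [MeasureTheory.integral_finset_sum _ (fun i _ => (hOutCont i).integrableOn_Icc)]
    refine Finset.sum_congr rfl (fun i _ => ?_)
    rw [MeasureTheory.integral_mul_const, hintDk i]
  rw [hfirst, hsecond]
  have hci : ∀ i : Fin N, c i = (2*(N:ℝ) - 2*((i:ℕ):ℝ) - 1)/(2*(N:ℝ)^2) := by
    intro i
    simp only [hc]
    field_simp
    ring
  have hsum : ∑ i : Fin N, c i * c i = ((N:ℝ)*(4*(N:ℝ)^2-1)/3)/(4*(N:ℝ)^4) := by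
    rw [Finset.sum_congr rfl (fun i _ => by rw [hci i]),
      Fin.sum_univ_eq_sum_range (fun n : ℕ =>
        ((2*(N:ℝ) - 2*(n:ℝ) - 1)/(2*(N:ℝ)^2)) * ((2*(N:ℝ) - 2*(n:ℝ) - 1)/(2*(N:ℝ)^2)))]
    have e : ∀ i ∈ Finset.range N,
        ((2*(N:ℝ) - 2*(i:ℝ) - 1)/(2*(N:ℝ)^2)) * ((2*(N:ℝ) - 2*(i:ℝ) - 1)/(2*(N:ℝ)^2))
        = (fun j : ℕ => (2*(j:ℝ)+1)^2 / (4*(N:ℝ)^4)) (N-1-i) := by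
      intro i hi
      have hi' : i < N := Finset.mem_range.mp hi
      have hcast : ((N-1-i : ℕ):ℝ) = (N:ℝ) - 1 - (i:ℝ) := by
        have h : N - 1 - i = N - (1 + i) := by omega
        rw [h, Nat.cast_sub (by omega)]
        push_cast
        ring
      simp only [hcast]
      field_simp
      ring
    rw [Finset.sum_congr rfl e, Finset.sum_range_reflect (fun j : ℕ => (2*(j:ℝ)+1)^2 / (4*(N:ℝ)^4)) N,
      ← Finset.sum_div, sum_odd_sq]
  rw [hsum]
  field_simp
  ring

lemma quadForm_pos (hN : 0 < N) (hf0 : f 0 = 0) (hf1 : f 1 ≠ 0) :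
    0 < quadForm1 bmK f (eqPts N) := by
  have hNR : (0:ℝ) < N := Nat.cast_pos.mpr hN
  rw [quadForm_eq hN hf0]
  apply mul_pos hNR
  have h1 : 0 ≤ ∑ i : Fin N, (f ((((i:ℕ):ℝ)+1)/N) - f (((i:ℕ):ℝ)/N))^2 :=
    Finset.sum_nonneg (fun i _ => sq_nonneg _)
  rcases h1.lt_or_eq with h | h
  · exact h
  · exfalso
    apply hf1
    rw [← sum_Df hN hf0]
    apply Finset.sum_eq_zero
    intro i _
    have hz := (Finset.sum_eq_zero_iff_of_nonneg
      (fun i (_ : i ∈ (Finset.univ : Finset (Fin N))) => sq_nonneg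
        (f ((((i:ℕ):ℝ)+1)/N) - f (((i:ℕ):ℝ)/N)))).mp h.symm
    exact (pow_eq_zero_iff two_ne_zero).mp (hz i (Finset.mem_univ i))

lemma quadForm_ge (hN : 0 < N) (hf0 : f 0 = 0) :
    (f 1)^2 ≤ quadForm1 bmK f (eqPts N) := by
  rw [quadForm_eq hN hf0, ← sum_Df hN hf0]
  have h := sq_sum_le_card_mul_sum_sq
    (s := (Finset.univ : Finset (Fin N)))
    (f := fun i => f ((((i:ℕ):ℝ)+1)/N) - f (((i:ℕ):ℝ)/N))
  simpa [Finset.card_univ] using h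

lemma quadForm_le (hN : 0 < N) (hf0 : f 0 = 0)
    (hd1 : ∀ t ∈ Set.Icc (0:ℝ) 1, DifferentiableAt ℝ f t)
    {L : ℝ} (hL : ∀ t ∈ Set.Icc (0:ℝ) 1, |deriv f t| ≤ L) :
    quadForm1 bmK f (eqPts N) ≤ L^2 := by
  have hNR : (0:ℝ) < N := Nat.cast_pos.mpr hN
  have hL0 : 0 ≤ L := le_trans (abs_nonneg _) (hL 0 (by norm_num))
  rw [quadForm_eq hN hf0]
  have key : ∀ i : Fin N, (f ((((i:ℕ):ℝ)+1)/N) - f (((i:ℕ):ℝ)/N))^2 ≤ (L/N)^2 := by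
    intro i
    have hab : ((i:ℕ):ℝ)/N < (((i:ℕ):ℝ)+1)/N := (div_lt_div_iff_of_pos_right hNR).mpr (by linarith)
    have h0 : (0:ℝ) ≤ ((i:ℕ):ℝ)/N := by positivity
    have h1 : ((((i:ℕ):ℝ))+1)/N ≤ 1 := by
      rw [div_le_one hNR]
      exact_mod_cast Nat.succ_le_of_lt i.isLt
    have hsub : Set.Icc (((i:ℕ):ℝ)/N) ((((i:ℕ):ℝ)+1)/N) ⊆ Set.Icc (0:ℝ) 1 :=
      Set.Icc_subset_Icc h0 h1
    have hcont : ContinuousOn f (Set.Icc (((i:ℕ):ℝ)/N) ((((i:ℕ):ℝ)+1)/N)) :=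
      fun x hx => ((hd1 x (hsub hx)).continuousAt).continuousWithinAt
    have hder : ∀ x ∈ Set.Ioo (((i:ℕ):ℝ)/N) ((((i:ℕ):ℝ)+1)/N), HasDerivAt f (deriv f x) x :=
      fun x hx => (hd1 x (hsub ⟨hx.1.le, hx.2.le⟩)).hasDerivAt
    obtain ⟨ξ, hξ, hslope⟩ := exists_hasDerivAt_eq_slope f (deriv f) hab hcont hder
    have hba : (((i:ℕ):ℝ)+1)/N - ((i:ℕ):ℝ)/N = 1/N := by field_simp; ring
    have heq : f ((((i:ℕ):ℝ)+1)/N) - f (((i:ℕ):ℝ)/N) = deriv f ξ * (1/N) := by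
      rw [← hba]
      field_simp at hslope ⊢
      linarith [hslope]
    have habs : |f ((((i:ℕ):ℝ)+1)/N) - f (((i:ℕ):ℝ)/N)| ≤ L/N := by
      rw [heq, abs_mul, abs_of_nonneg (by positivity : (0:ℝ) ≤ 1/(N:ℝ))]
      calc |deriv f ξ| * (1/(N:ℝ)) ≤ L * (1/N) :=
        mul_le_mul_of_nonneg_right (hL ξ (hsub ⟨hξ.1.le, hξ.2.le⟩)) (by positivity)
      _ = L/N := by ring
    calc (f ((((i:ℕ):ℝ)+1)/N) - f (((i:ℕ):ℝ)/N))^2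
        = |f ((((i:ℕ):ℝ)+1)/N) - f (((i:ℕ):ℝ)/N)|^2 := (sq_abs _).symm
      _ ≤ (L/N)^2 := by
          apply pow_le_pow_left₀ (abs_nonneg _) habs
  calc (N:ℝ) * ∑ i : Fin N, (f ((((i:ℕ):ℝ)+1)/N) - f (((i:ℕ):ℝ)/N))^2
      ≤ (N:ℝ) * ∑ _i : Fin N, (L/N)^2 :=
        mul_le_mul_of_nonneg_left (Finset.sum_le_sum (fun i _ => key i)) hNR.le
    _ = L^2 := by
        rw [Finset.sum_const, Finset.card_univ, Fintype.card_fin, nsmul_eq_mul]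
        field_simp

lemma sqrtV_eq (hN : 0 < N) :
    Real.sqrt (quadV1 bmK (eqPts N)) = 1/(Real.sqrt 12 * N) := by
  have hNR : (0:ℝ) < N := Nat.cast_pos.mpr hN
  have h12 : (0:ℝ) < Real.sqrt 12 := Real.sqrt_pos.mpr (by norm_num)
  rw [quadV_eq hN, show (1:ℝ)/(12*(N:ℝ)^2) = (1/(Real.sqrt 12 * N))^2 from by
    rw [div_pow, one_pow, mul_pow, Real.sq_sqrt (by norm_num : (0:ℝ) ≤ 12)],
    Real.sqrt_sq (by positivity)]


end BTS
end

noncomputable section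

/-- For the Brownian motion kernel `K(s,t) = min{s,t}` on `[0,1]`,
weight `w ≡ 1`, and the equispaced points `X_N = {1/N, …, 1}`: if `f` is twice
differentiable on `[0,1]` with bounded second derivative, `f(0) = 0` and `f(1) ≠ 0`,
then the Bayesian quadrature standard score satisfies
`|I(f) − Q_{X_N}(f)| / R_BC(f,X_N) ≤ sup_{t∈[0,1]} |f''(t)| / (√12 · N · σ_ML(f,X_N))`
and this is `≲ N^{−1/2}`; if moreover `f'' > c > 0` on `[0,1]`, then the standard score
is also `≳ N^{−1/2}`. -/
theorem brownian_trapezoidal_score (f : ℝ → ℝ) (hf0 : f 0 = 0) (hf1 : f 1 ≠ 0)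
    (hd1 : ∀ t ∈ Set.Icc (0 : ℝ) 1, DifferentiableAt ℝ f t)
    (hd2 : ∀ t ∈ Set.Icc (0 : ℝ) 1, DifferentiableAt ℝ (deriv f) t)
    (hbdd : ∃ M : ℝ, ∀ t ∈ Set.Icc (0 : ℝ) 1, |deriv (deriv f) t| ≤ M) :
    (∀ N : ℕ, 0 < N →
      score1 (intF1 f - quadQ1 bmK (eqPts N) f) (RBC1 bmK f (eqPts N)) ≤
        (⨆ t : Set.Icc (0 : ℝ) 1, |deriv (deriv f) (t : ℝ)|) /
          (Real.sqrt 12 * N * sigmaML1 bmK f (eqPts N))) ∧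
    (∃ C : ℝ, 0 < C ∧ ∀ᶠ N : ℕ in atTop,
      score1 (intF1 f - quadQ1 bmK (eqPts N) f) (RBC1 bmK f (eqPts N)) ≤
        C * (N : ℝ) ^ (-(1 / 2 : ℝ))) ∧
    (∀ c : ℝ, 0 < c → (∀ t ∈ Set.Icc (0 : ℝ) 1, c < deriv (deriv f) t) →
      ∃ c' : ℝ, 0 < c' ∧ ∀ᶠ N : ℕ in atTop,
        c' * (N : ℝ) ^ (-(1 / 2 : ℝ)) ≤
          score1 (intF1 f - quadQ1 bmK (eqPts N) f) (RBC1 bmK f (eqPts N))) := by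
  obtain ⟨M₀, hM₀⟩ := hbdd
  have hbdda : BddAbove (Set.range fun t : Set.Icc (0:ℝ) 1 => |deriv (deriv f) (t:ℝ)|) :=
    ⟨M₀, by rintro y ⟨t, rfl⟩; exact hM₀ t t.2⟩
  set M : ℝ := ⨆ t : Set.Icc (0:ℝ) 1, |deriv (deriv f) (t:ℝ)| with hMdef
  have hMle : ∀ t ∈ Set.Icc (0:ℝ) 1, |deriv (deriv f) t| ≤ M :=
    fun t ht => le_ciSup hbdda (⟨t, ht⟩ : Set.Icc (0:ℝ) 1)
  have hM0 : 0 ≤ M := le_trans (abs_nonneg _) (hMle 0 (by norm_num))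
  have h12 : (0:ℝ) < Real.sqrt 12 := Real.sqrt_pos.mpr (by norm_num)
  have h12sq : Real.sqrt 12 * Real.sqrt 12 = 12 := Real.mul_self_sqrt (by norm_num)
  have hf1' : 0 < |f 1| := abs_pos.mpr hf1
  have common : ∀ N : ℕ, 0 < N →
      0 < sigmaML1 bmK f (eqPts N) ∧
      RBC1 bmK f (eqPts N) = sigmaML1 bmK f (eqPts N) * (1/(Real.sqrt 12 * N)) ∧
      0 < RBC1 bmK f (eqPts N) := by
    intro N hN
    have hNR : (0:ℝ) < N := Nat.cast_pos.mpr hN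
    have hσ : 0 < sigmaML1 bmK f (eqPts N) :=
      Real.sqrt_pos.mpr (div_pos (BTS.quadForm_pos hN hf0 hf1) hNR)
    have hR : RBC1 bmK f (eqPts N) = sigmaML1 bmK f (eqPts N) * (1/(Real.sqrt 12 * N)) := by
      rw [RBC1, BTS.sqrtV_eq hN]
    refine ⟨hσ, hR, by rw [hR]; positivity⟩
  have part1 : ∀ N : ℕ, 0 < N →
      score1 (intF1 f - quadQ1 bmK (eqPts N) f) (RBC1 bmK f (eqPts N)) ≤
        M / (Real.sqrt 12 * N * sigmaML1 bmK f (eqPts N)) := by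
    intro N hN
    obtain ⟨hσ, hR, hRpos⟩ := common N hN
    have hNR : (0:ℝ) < N := Nat.cast_pos.mpr hN
    have herr := BTS.err_abs_le hN hf0 hd1 hd2 hMle
    rw [score1, if_neg hRpos.ne', hR, div_le_div_iff₀ (by positivity) (by positivity)]
    calc |intF1 f - quadQ1 bmK (eqPts N) f| * (Real.sqrt 12 * N * sigmaML1 bmK f (eqPts N))
        ≤ (M/(12*(N:ℝ)^2)) * (Real.sqrt 12 * N * sigmaML1 bmK f (eqPts N)) :=
          mul_le_mul_of_nonneg_right herr (by positivity)
      _ = M * (sigmaML1 bmK f (eqPts N) * (1/(Real.sqrt 12 * N))) := by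
          field_simp
          ring_nf
          rw [Real.sq_sqrt (by norm_num : (0:ℝ) ≤ 12)]
  refine ⟨part1, ?_, ?_⟩
  · refine ⟨M/(Real.sqrt 12 * |f 1|) + 1, by positivity, ?_⟩
    filter_upwards [Filter.eventually_gt_atTop 0] with N hN
    obtain ⟨hσ, hR, hRpos⟩ := common N hN
    have hNR : (0:ℝ) < N := Nat.cast_pos.mpr hN
    have hsN : 0 < Real.sqrt N := Real.sqrt_pos.mpr hNR
    have hNN : ((N:ℝ)) = Real.sqrt N * Real.sqrt N := (Real.mul_self_sqrt (Nat.cast_nonneg N)).symm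
    have hσge : |f 1| / Real.sqrt N ≤ sigmaML1 bmK f (eqPts N) := by
      rw [sigmaML1]
      calc |f 1| / Real.sqrt N = Real.sqrt ((f 1)^2 / N) := by
            rw [Real.sqrt_div (sq_nonneg _), Real.sqrt_sq_eq_abs]
        _ ≤ _ := Real.sqrt_le_sqrt ((div_le_div_iff_of_pos_right hNR).mpr (BTS.quadForm_ge hN hf0))
    have hrpow : (N:ℝ)^(-(1/2:ℝ)) = 1/Real.sqrt N := by
      rw [Real.rpow_neg (Nat.cast_nonneg N), ← Real.sqrt_eq_rpow, one_div]
    calc score1 (intF1 f - quadQ1 bmK (eqPts N) f) (RBC1 bmK f (eqPts N))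
        ≤ M / (Real.sqrt 12 * N * sigmaML1 bmK f (eqPts N)) := part1 N hN
      _ ≤ M / (Real.sqrt 12 * N * (|f 1|/Real.sqrt N)) := by
          gcongr
          all_goals first
          | exact hM0
          | positivity
          | exact hσge
      _ = (M/(Real.sqrt 12 * |f 1|)) * (1/Real.sqrt N) := by
          rw [show Real.sqrt 12 * (N:ℝ) * (|f 1|/Real.sqrt N)
              = (Real.sqrt 12 * |f 1|) * Real.sqrt N from by
            field_simp
            linear_combination hNN]
          rw [div_mul_eq_div_mul_one_div]
      _ ≤ (M/(Real.sqrt 12 * |f 1|) + 1) * (1/Real.sqrt N) := by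
          apply mul_le_mul_of_nonneg_right _ (by positivity)
          linarith
      _ = (M/(Real.sqrt 12 * |f 1|) + 1) * (N:ℝ)^(-(1/2:ℝ)) := by rw [hrpow]
  · intro c hc hcc
    have hContf' : ContinuousOn (deriv f) (Set.Icc (0:ℝ) 1) :=
      fun x hx => ((hd2 x hx).continuousAt).continuousWithinAt
    obtain ⟨L₀, hL₀⟩ := isCompact_Icc.exists_bound_of_continuousOn hContf'
    have hLpos : (0:ℝ) < max L₀ 1 := lt_of_lt_of_le one_pos (le_max_right _ _)
    have hL : ∀ t ∈ Set.Icc (0:ℝ) 1, |deriv f t| ≤ max L₀ 1 := fun t ht =>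
      le_trans (by simpa [Real.norm_eq_abs] using hL₀ t ht) (le_max_left _ _)
    refine ⟨c/(Real.sqrt 12 * max L₀ 1), div_pos hc (by positivity), ?_⟩
    filter_upwards [Filter.eventually_gt_atTop 0] with N hN
    obtain ⟨hσ, hR, hRpos⟩ := common N hN
    have hNR : (0:ℝ) < N := Nat.cast_pos.mpr hN
    have hsN : 0 < Real.sqrt N := Real.sqrt_pos.mpr hNR
    have hNN : ((N:ℝ)) = Real.sqrt N * Real.sqrt N := (Real.mul_self_sqrt (Nat.cast_nonneg N)).symm
    have herr := BTS.err_lower hN hf0 hd1 hd2 hMle hc hcc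
    have hσle : sigmaML1 bmK f (eqPts N) ≤ (max L₀ 1)/Real.sqrt N := by
      rw [sigmaML1]
      calc Real.sqrt (quadForm1 bmK f (eqPts N) / N) ≤ Real.sqrt ((max L₀ 1)^2/N) :=
            Real.sqrt_le_sqrt ((div_le_div_iff_of_pos_right hNR).mpr (BTS.quadForm_le hN hf0 hd1 hL))
        _ = (max L₀ 1)/Real.sqrt N := by
            rw [Real.sqrt_div (sq_nonneg _), Real.sqrt_sq hLpos.le]
    have hRle : RBC1 bmK f (eqPts N) ≤ ((max L₀ 1)/Real.sqrt N) * (1/(Real.sqrt 12 * N)) := by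
      rw [hR]
      exact mul_le_mul_of_nonneg_right hσle (by positivity)
    rw [score1, if_neg hRpos.ne']
    have hrpow : (N:ℝ)^(-(1/2:ℝ)) = 1/Real.sqrt N := by
      rw [Real.rpow_neg (Nat.cast_nonneg N), ← Real.sqrt_eq_rpow, one_div]
    calc c/(Real.sqrt 12 * max L₀ 1) * (N:ℝ)^(-(1/2:ℝ))
        = (c/(12*(N:ℝ)^2)) / (((max L₀ 1)/Real.sqrt N) * (1/(Real.sqrt 12 * N))) := by
          rw [hrpow, div_mul_div_comm, div_eq_div_iff (by positivity) (by positivity)]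
          field_simp
          ring_nf
          rw [Real.sq_sqrt (by norm_num : (0:ℝ) ≤ 12), Real.sq_sqrt (Nat.cast_nonneg N)]
      _ ≤ |intF1 f - quadQ1 bmK (eqPts N) f| / RBC1 bmK f (eqPts N) :=
          div_le_div₀ (abs_nonneg _) herr hRpos hRle


end
end
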